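/- arXiv:2506.17058 — 10 statements merged into one kernel-verified Lean document; each statement's English description precedes it below -/
import Mathlib

section
/- For every agent i, a scalar π satisfies π ∈ 𝒲_i together with π ≤ b_i(x*) for every optimal allocation x* ∈ 𝒳*(b) if and only if 0 ≤ π ≤ V_w(N) − V_w(N∖{i}). (In words: within the range of discounts bounded by the agent's bid on every optimal allocation, the set of optimality-preserving discounts for agent i is exactly the interval from 0 to its VCG discount.) -/
open Finset

variable {X N : Type*}

/-- `x` is an optimal allocation for the bid profile `b`. -/
def Optimal [Fintype N] (b : N → X → ℝ) (x : X) : Prop :=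
  ∀ y : X, ∑ i, b i y ≤ ∑ i, b i x

/-- Agent `i` is winning: it wins in some optimal allocation. -/
def Winning [Fintype N] (v b : N → X → ℝ) (i : N) : Prop :=
  ∃ x, Optimal b x ∧ 0 < v i x

/-- Agent `i` is losing: it loses in some optimal allocation. -/
def Losing [Fintype N] (v b : N → X → ℝ) (i : N) : Prop :=
  ∃ x, Optimal b x ∧ ¬ 0 < v i x

/-- The bid `b` discounted by `π`. -/
def Disc (b : X → ℝ) (π : ℝ) : X → ℝ := fun x => max (b x - π) 0

/-- `c` is a raised bid of `b` (with valuation `v`) with raise `μ`. -/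
def IsRaised (v b : X → ℝ) (μ : ℝ) (c : X → ℝ) : Prop :=
  (∀ x, 0 < b x → c x = b x + μ) ∧
  (∀ x, b x = 0 → 0 ≤ c x ∧ c x ≤ μ) ∧
  (∀ x, ¬ 0 < v x → c x = 0)

/-- The coalitional value `V_w(S)`: the maximum over allocations of the total bid of `S`. -/
def Vw [Fintype X] [Nonempty X] (b : N → X → ℝ) (S : Finset N) : ℝ :=
  Finset.univ.sup' Finset.univ_nonempty fun x => ∑ i ∈ S, b i x

/-- `r` is the coalitional value `V_ℓ(S)`: the maximum total bid over allocations in which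
every agent outside `S` wins. -/
def VlVal [Fintype N] (v b : N → X → ℝ) (S : Finset N) (r : ℝ) : Prop :=
  IsGreatest {r : ℝ | ∃ x : X, (∀ i, i ∉ S → 0 < v i x) ∧ r = ∑ i, b i x} r

/-- `r` is the bicooperative coalitional value `V(S,T)`: the maximum of the total bid of
`S ∪ T` over allocations in which every agent of `T` wins. -/
def VVal [DecidableEq N] (v b : N → X → ℝ) (S T : Finset N) (r : ℝ) : Prop :=
  IsGreatest {r : ℝ | ∃ x : X, (∀ i ∈ T, 0 < v i x) ∧ r = ∑ i ∈ S ∪ T, b i x} r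

/-- `π`, `μ` are valid discounts and raises. -/
def Valid [Fintype N] (v b : N → X → ℝ) (π μ : N → ℝ) : Prop :=
  (∀ i, 0 ≤ π i) ∧ (∀ i, 0 ≤ μ i) ∧
  (∀ i, Winning v b i → μ i = 0 ∧ ∀ x, Optimal b x → π i ≤ b i x) ∧
  (∀ i, Losing v b i → π i = 0)

/-- Agent-free-disposal. -/
def AFD [Fintype N] [DecidableEq N] (v : N → X → ℝ) : Prop :=
  ∀ b' : N → X → ℝ, (∀ i x, 0 ≤ b' i x ∧ b' i x ≤ v i x) →
    ∀ S : Finset N, ∀ x : X, ∃ x' : X,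
      (∑ i ∈ univ \ S, b' i x ≤ ∑ i ∈ univ \ S, b' i x') ∧ ∀ i ∈ S, ¬ 0 < v i x'

/-- The core `𝒞(N, V_w)`. -/
def CoreW [Fintype X] [Nonempty X] [Fintype N] [DecidableEq N]
    (b : N → X → ℝ) (π : N → ℝ) : Prop :=
  (∀ i, 0 ≤ π i) ∧ ∀ S : Finset N, ∑ i ∈ S, π i ≤ Vw b univ - Vw b (univ \ S)

/-- The core `𝒞(N, V_ℓ)`. -/
def CoreL [Fintype N] [DecidableEq N] (v b : N → X → ℝ) (μ : N → ℝ) : Prop :=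
  (∀ i, 0 ≤ μ i) ∧ ∀ (S : Finset N) (rN rS : ℝ),
    VlVal v b univ rN → VlVal v b (univ \ S) rS → ∑ i ∈ S, μ i ≤ rN - rS

/-- The bicore `𝒞₂(N, V)`. -/
def Bicore [Fintype N] [DecidableEq N] (v b : N → X → ℝ) (π μ : N → ℝ) : Prop :=
  (∀ i, 0 ≤ π i) ∧ (∀ i, 0 ≤ μ i) ∧
  ∀ (S T : Finset N) (rN r : ℝ),
    VVal v b univ ∅ rN → VVal v b (univ \ S) T r →
      ∑ i ∈ S, π i + ∑ j ∈ T, μ j ≤ rN - r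

/-- within the range of discounts bounded by the agent's bid on every optimal
allocation, the set of optimality-preserving discounts for agent `i` is exactly the interval
from `0` to its VCG discount `V_w(N) - V_w(N \ {i})`. -/
theorem stmt0 [Fintype X] [Nonempty X] [Fintype N] [Nonempty N] [DecidableEq N]
    (v b : N → X → ℝ)
    (hb : ∀ i x, 0 ≤ b i x ∧ b i x ≤ v i x)
    (hsupp : ∀ i, ∃ x, 0 < v i x)
    (hafd : AFD v)
    (i : N) (π : ℝ) :
    ((0 ≤ π ∧
        ∀ b' : N → X → ℝ, b' i = Disc (b i) π → (∀ j, j ≠ i → b' j = b j) →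
          ∀ x, Optimal b x → Optimal b' x) ∧
      ∀ x, Optimal b x → π ≤ b i x) ↔
      0 ≤ π ∧ π ≤ Vw b univ - Vw b (univ \ {i}) := by

  classical
  have hsplit : ∀ (c : N → X → ℝ) (x : X),
      ∑ j, c j x = c i x + ∑ j ∈ univ \ {i}, c j x := by
    intro c x
    rw [← Finset.erase_eq, ← Finset.add_sum_erase univ (fun j => c j x) (mem_univ i)]
  have hVwN : ∀ x, Optimal b x → ∑ j, b j x = Vw b univ := by
    intro x hx
    unfold Vw
    exact le_antisymm (Finset.le_sup' (fun z : X => ∑ j, b j z) (mem_univ x)) (Finset.sup'_le _ _ fun y _ => hx y)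
  have hVwi : ∀ y : X, ∑ j ∈ univ \ {i}, b j y ≤ Vw b (univ \ {i}) := by
    intro y; unfold Vw; exact Finset.le_sup' (fun z : X => ∑ j ∈ univ \ {i}, b j z) (mem_univ y)
  constructor
  · rintro ⟨⟨hπ0, hpres⟩, hπb⟩
    refine ⟨hπ0, ?_⟩
    obtain ⟨x, -, hx⟩ := Finset.exists_mem_eq_sup' (α := ℝ) Finset.univ_nonempty
      (fun x : X => ∑ j, b j x)
    have hxopt : Optimal b x := by
      intro y
      rw [← hx]
      exact Finset.le_sup' (fun z : X => ∑ j, b j z) (mem_univ y)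
    set b' : N → X → ℝ := fun j => if j = i then Disc (b i) π else b j with hb'
    have hb'i : b' i = Disc (b i) π := by simp [hb']
    have hb'j : ∀ j, j ≠ i → b' j = b j := fun j hj => by simp [hb', hj]
    have hx'opt : Optimal b' x := hpres b' hb'i hb'j x hxopt
    obtain ⟨y, -, hy⟩ := Finset.exists_mem_eq_sup' (α := ℝ) Finset.univ_nonempty
      (fun y : X => ∑ j ∈ univ \ {i}, b j y)
    have hrest : ∀ z : X, ∑ j ∈ univ \ {i}, b' j z = ∑ j ∈ univ \ {i}, b j z := by
      intro z
      refine Finset.sum_congr rfl fun j hj => ?_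
      rw [hb'j j (by simpa using (Finset.mem_sdiff.mp hj).2)]
    have h1 : ∑ j, b' j x = ∑ j, b j x - π := by
      rw [hsplit b' x, hsplit b x, hrest, hb'i]
      have : Disc (b i) π x = b i x - π := by
        simp [Disc, max_eq_left, sub_nonneg.mpr (hπb x hxopt)]
      rw [this]; ring
    have h2 : ∑ j ∈ univ \ {i}, b j y ≤ ∑ j, b' j y := by
      rw [hsplit b' y, hrest]
      have : (0 : ℝ) ≤ b' i y := by rw [hb'i]; exact le_max_right _ _
      linarith
    have h3 := hx'opt y
    have h4 := hVwN x hxopt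
    have h5 : Vw b (univ \ {i}) = ∑ j ∈ univ \ {i}, b j y := hy
    linarith
  · rintro ⟨hπ0, hπle⟩
    have hkey : ∀ x, Optimal b x → π ≤ b i x := by
      intro x hx
      have h1 := hVwN x hx
      have h2 := hVwi x
      have h3 := hsplit b x
      linarith
    refine ⟨⟨hπ0, ?_⟩, hkey⟩
    intro b' hb'i hb'j x hx y
    have hrest : ∀ z : X, ∑ j ∈ univ \ {i}, b' j z = ∑ j ∈ univ \ {i}, b j z := by
      intro z
      refine Finset.sum_congr rfl fun j hj => ?_
      rw [hb'j j (by simpa using (Finset.mem_sdiff.mp hj).2)]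
    have hx' : ∑ j, b' j x = ∑ j, b j x - π := by
      rw [hsplit b' x, hsplit b x, hrest, hb'i]
      have : Disc (b i) π x = b i x - π := by
        simp [Disc, max_eq_left, sub_nonneg.mpr (hkey x hx)]
      rw [this]; ring
    rw [hx']
    rcases le_or_gt π (b i y) with h | h
    · have hy' : ∑ j, b' j y = ∑ j, b j y - π := by
        rw [hsplit b' y, hsplit b y, hrest, hb'i]
        have : Disc (b i) π y = b i y - π := by
          simp [Disc, max_eq_left, sub_nonneg.mpr h]
        rw [this]; ring
      rw [hy']
      have := hx y
      linarith
    · have hy' : ∑ j, b' j y = ∑ j ∈ univ \ {i}, b j y := by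
        rw [hsplit b' y, hrest, hb'i]
        have : Disc (b i) π y = 0 := by
          simp [Disc, max_eq_right, sub_nonpos.mpr h.le]
        rw [this]; ring
      rw [hy']
      have h2 := hVwi y
      have := hVwN x hx
      linarith
end

section
/- Suppose agent i loses in every optimal allocation, i.e., x* ∉ supp v_i for every x* ∈ 𝒳*(b). Then ℒ_i = {μ : 0 ≤ μ ≤ V_ℓ(N) − V_ℓ(N∖{i})}; that is, a raise μ ≥ 0 preserves the optimality of every optimal allocation under every admissible raised bid of agent i if and only if μ is at most the VCG raise V_ℓ(N) − V_ℓ(N∖{i}). -/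
open Finset

variable {X N : Type*}

/-- if agent `i` loses in every optimal allocation, then a raise `μ ≥ 0`
preserves the optimality of every optimal allocation under every admissible raised bid of
agent `i` if and only if `μ` is at most the VCG raise `V_ℓ(N) - V_ℓ(N \ {i})`. -/
theorem stmt1 [Fintype X] [Nonempty X] [Fintype N] [Nonempty N] [DecidableEq N]
    (v b : N → X → ℝ)
    (hb : ∀ i x, 0 ≤ b i x ∧ b i x ≤ v i x)
    (hsupp : ∀ i, ∃ x, 0 < v i x)
    (i : N) (hlose : ∀ x, Optimal b x → ¬ 0 < v i x)
    (VlN Vli : ℝ)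
    (hVlN : VlVal v b univ VlN)
    (hVli : VlVal v b (univ \ {i}) Vli)
    (μ : ℝ) :
    (0 ≤ μ ∧
      ∀ c : X → ℝ, IsRaised (v i) (b i) μ c →
        ∀ b' : N → X → ℝ, b' i = c → (∀ j, j ≠ i → b' j = b j) →
          ∀ x, Optimal b x → Optimal b' x) ↔
      0 ≤ μ ∧ μ ≤ VlN - Vli := by
  obtain ⟨⟨x0, -, hx0⟩, hub⟩ := hVlN
  obtain ⟨⟨x1, hx1v, hx1⟩, hub1⟩ := hVli
  have hx1i : 0 < v i x1 := hx1v i (by simp)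
  have hball : ∀ y, ∑ j, b j y ≤ VlN := fun y =>
    hub ⟨y, fun j hj => absurd (mem_univ j) hj, rfl⟩
  have hx0opt : Optimal b x0 := fun y => hx0 ▸ hball y
  have hbzero : ∀ x, ¬ 0 < v i x → b i x = 0 := fun x hx =>
    le_antisymm ((hb i x).2.trans (not_lt.mp hx)) (hb i x).1
  have hsum : ∀ (c : X → ℝ) (b' : N → X → ℝ), b' i = c → (∀ j, j ≠ i → b' j = b j) →
      ∀ z, ∑ j, b' j z = ∑ j, b j z - b i z + c z := by
    intro c b' hbi hbj z
    have h1 : ∑ j ∈ univ.erase i, b' j z + b' i z = ∑ j, b' j z :=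
      Finset.sum_erase_add _ _ (mem_univ i)
    have h2 : ∑ j ∈ univ.erase i, b j z + b i z = ∑ j, b j z :=
      Finset.sum_erase_add _ _ (mem_univ i)
    have h3 : ∑ j ∈ univ.erase i, b' j z = ∑ j ∈ univ.erase i, b j z :=
      Finset.sum_congr rfl fun j hj => by rw [hbj j (Finset.ne_of_mem_erase hj)]
    rw [← h1, h3, hbi]
    linarith
  constructor
  · rintro ⟨hμ0, h⟩
    refine ⟨hμ0, ?_⟩
    set c : X → ℝ := fun x => if 0 < v i x then b i x + μ else 0 with hc
    have hcr : IsRaised (v i) (b i) μ c := by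
      refine ⟨fun x hx => ?_, fun x hx => ?_, fun x hx => if_neg hx⟩
      · have : 0 < v i x := lt_of_lt_of_le hx (hb i x).2
        simp [hc, this]
      · by_cases hv : 0 < v i x <;> simp [hc, hv, hx, hμ0]
    have hopt := h c hcr (Function.update b i c) (Function.update_self i c b)
      (fun j hj => Function.update_of_ne hj _ _) x0 hx0opt x1
    have e1 := hsum c (Function.update b i c) (Function.update_self i c b)
      (fun j hj => Function.update_of_ne hj _ _) x1
    have e0 := hsum c (Function.update b i c) (Function.update_self i c b)
      (fun j hj => Function.update_of_ne hj _ _) x0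
    have hv0 : ¬ 0 < v i x0 := hlose x0 hx0opt
    have hc1 : c x1 = b i x1 + μ := if_pos hx1i
    have hc0 : c x0 = 0 := if_neg hv0
    have hb0 : b i x0 = 0 := hbzero x0 hv0
    rw [e1, e0, hc1, hc0, hb0] at hopt
    linarith [hopt, hx0, hx1]
  · rintro ⟨hμ0, hμ⟩
    refine ⟨hμ0, fun c hcr b' hbi hbj x hxopt y => ?_⟩
    have hvx : ¬ 0 < v i x := hlose x hxopt
    have hbx : b i x = 0 := hbzero x hvx
    have hcx : c x = 0 := hcr.2.2 x hvx
    have hxval : ∑ j, b j x = VlN := le_antisymm (hball x) (hx0 ▸ hxopt x0)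
    have ex := hsum c b' hbi hbj x
    have ey := hsum c b' hbi hbj y
    rw [ex, ey, hbx, hcx, hxval]
    by_cases hvy : 0 < v i y
    · have hyl : ∑ j, b j y ≤ Vli := hub1 ⟨y, fun j hj => by
        have : j = i := by simpa using hj
        rwa [this], rfl⟩
      have hcy : c y ≤ b i y + μ := by
        rcases lt_or_eq_of_le (hb i y).1 with hpos | hzero
        · exact le_of_eq (hcr.1 y hpos)
        · have := (hcr.2.1 y hzero.symm).2
          linarith
      linarith
    · have hcy : c y = 0 := hcr.2.2 y hvy
      have hby : b i y = 0 := hbzero y hvy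
      have := hball y
      linarith
end

section
/- If for every agent i we have 0 ≤ π_i ≤ V_w(N) − V_w(N∖{i}) and 0 ≤ μ_i ≤ V_ℓ(N) − V_ℓ(N∖{i}), then the vectors π and μ are valid discounts and raises; in particular, μ_i = 0 for every winning agent i, π_i = 0 for every losing agent i, and π_i ≤ b_i(x*) for every agent i and every optimal allocation x* ∈ 𝒳*(b). -/
open Finset

variable {X N : Type*}

/-- if each discount is between 0 and the agent's VCG discount and each raise
is between 0 and the agent's VCG raise, then `π` and `μ` are valid discounts and raises. -/
theorem stmt2 [Fintype X] [Nonempty X] [Fintype N] [Nonempty N] [DecidableEq N]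
    (v b : N → X → ℝ)
    (hb : ∀ i x, 0 ≤ b i x ∧ b i x ≤ v i x)
    (hsupp : ∀ i, ∃ x, 0 < v i x)
    (π μ : N → ℝ)
    (VlN : ℝ) (Vli : N → ℝ)
    (hVlN : VlVal v b univ VlN)
    (hVli : ∀ i, VlVal v b (univ \ {i}) (Vli i))
    (hπ : ∀ i, 0 ≤ π i ∧ π i ≤ Vw b univ - Vw b (univ \ {i}))
    (hμ : ∀ i, 0 ≤ μ i ∧ μ i ≤ VlN - Vli i) :
    Valid v b π μ := by
  have hVwx : ∀ x : X, Optimal b x → Vw b univ = ∑ i, b i x := by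
    intro x hx
    apply le_antisymm
    · exact Finset.sup'_le _ _ fun y _ => hx y
    · exact Finset.le_sup' (f := fun x => ∑ i ∈ univ, b i x) (Finset.mem_univ x)
  refine ⟨fun i => (hπ i).1, fun i => (hμ i).1, ?_, ?_⟩
  · intro i ⟨x, hx, hvix⟩
    constructor
    · -- μ i = 0
      have hmem : (∑ j, b j x) ∈ {r : ℝ | ∃ y : X, (∀ j, j ∉ univ \ {i} → 0 < v j y) ∧ r = ∑ j, b j y} := by
        refine ⟨x, fun j hj => ?_, rfl⟩
        have : j = i := by simpa using hj
        simpa [this] using hvix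
      have h1 : (∑ j, b j x) ≤ Vli i := (hVli i).2 hmem
      have h2 : VlN ≤ ∑ j, b j x := by
        obtain ⟨y, -, hy⟩ := hVlN.1
        exact hy ▸ hx y
      have := (hμ i).2
      linarith [(hμ i).1]
    · intro y hy
      have h1 := (hπ i).2
      have h2 : Vw b (univ \ {i}) ≥ ∑ j ∈ univ \ {i}, b j y :=
        Finset.le_sup' (f := fun x => ∑ j ∈ univ \ {i}, b j x) (Finset.mem_univ y)
      have h3 : Vw b univ = ∑ j, b j y := hVwx y hy
      have h4 : ∑ j, b j y = ∑ j ∈ univ \ {i}, b j y + b i y := by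
        rw [Finset.sum_sdiff_eq_sub (Finset.subset_univ {i}), Finset.sum_singleton]
        ring
      linarith
  · intro i ⟨x, hx, hvix⟩
    have hbix : b i x = 0 :=
      le_antisymm (le_trans (hb i x).2 (not_lt.mp hvix)) (hb i x).1
    have h2 : Vw b (univ \ {i}) ≥ ∑ j ∈ univ \ {i}, b j x :=
      Finset.le_sup' (f := fun y => ∑ j ∈ univ \ {i}, b j y) (Finset.mem_univ x)
    have h3 : Vw b univ = ∑ j, b j x := hVwx x hx
    have h4 : ∑ j, b j x = ∑ j ∈ univ \ {i}, b j x + b i x := by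
      rw [Finset.sum_sdiff_eq_sub (Finset.subset_univ {i}), Finset.sum_singleton]
      ring
    have := (hπ i).2
    linarith [(hπ i).1]
end

section
/- A vector π ∈ ℝ^N belongs to the core 𝒞(N,V_w) if and only if (π, 0) are valid discounts and raises and, for every coalition S ⊆ N, every optimal allocation under the original bids remains optimal after every agent i ∈ S discounts its bid by π_i (i.e., 𝒳*(b) ⊆ 𝒳*(b'), where b'_i is b_i discounted by π_i for i ∈ S and b'_i = b_i for i ∉ S). -/
open Finset

variable {X N : Type*}

section aux

variable [Fintype X] [Nonempty X] [Fintype N] [DecidableEq N]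

lemma sum_le_Vw (b : N → X → ℝ) (S : Finset N) (x : X) :
    ∑ i ∈ S, b i x ≤ Vw b S :=
  Finset.le_sup' (f := fun x : X => ∑ i ∈ S, b i x) (mem_univ x)

lemma exists_Vw (b : N → X → ℝ) (S : Finset N) :
    ∃ x, Vw b S = ∑ i ∈ S, b i x := by
  obtain ⟨x, -, hx⟩ := Finset.exists_mem_eq_sup' Finset.univ_nonempty
    (fun x : X => ∑ i ∈ S, b i x)
  exact ⟨x, hx⟩

lemma exists_optimal (b : N → X → ℝ) : ∃ x, Optimal b x := by
  obtain ⟨x, hx⟩ := exists_Vw b univ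
  exact ⟨x, fun y => hx ▸ sum_le_Vw b univ y⟩

lemma Vw_eq_of_optimal (b : N → X → ℝ) (x : X) (hx : Optimal b x) :
    Vw b univ = ∑ i, b i x := by
  obtain ⟨y, hy⟩ := exists_Vw b univ
  exact le_antisymm (hy ▸ hx y) (sum_le_Vw b univ x)

lemma core_pi_le (b : N → X → ℝ) (π : N → ℝ) (h : CoreW b π) (x : X) (hx : Optimal b x)
    (i : N) : π i ≤ b i x := by
  have h1 := h.2 {i}
  rw [sum_singleton] at h1
  have h2 : Vw b univ = ∑ j, b j x := Vw_eq_of_optimal b x hx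
  have h3 : ∑ j, b j x - b i x ≤ Vw b (univ \ {i}) := by
    have h5 := sum_le_Vw b (univ \ {i}) x
    have h4 : ∑ j ∈ univ \ {i}, b j x = ∑ j, b j x - b i x := by
      rw [sum_sdiff_eq_sub (subset_univ _), sum_singleton]
    linarith
  linarith

/-- Under `π i ≤ b i x` on `S`, the discounted total at `x` is the original minus `∑_S π`. -/
lemma sum_disc_eq (b : N → X → ℝ) (π : N → ℝ) (S : Finset N) (b' : N → X → ℝ)
    (hbS : ∀ i ∈ S, b' i = Disc (b i) (π i)) (hbSc : ∀ i ∉ S, b' i = b i)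
    (x : X) (hle : ∀ i ∈ S, π i ≤ b i x) :
    ∑ i, b' i x = ∑ i, b i x - ∑ i ∈ S, π i := by
  have h1 : ∑ i ∈ univ \ S, b' i x = ∑ i ∈ univ \ S, b i x :=
    Finset.sum_congr rfl fun i hi => by rw [hbSc i (mem_sdiff.1 hi).2]
  have h2 : ∑ i ∈ S, b' i x = ∑ i ∈ S, b i x - ∑ i ∈ S, π i := by
    rw [← Finset.sum_sub_distrib]
    refine Finset.sum_congr rfl fun i hi => ?_
    rw [hbS i hi]
    exact max_eq_left (sub_nonneg.2 (hle i hi))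
  have h3 := Finset.sum_sdiff_eq_sub (subset_univ S) (f := fun i => b' i x)
  have h4 := Finset.sum_sdiff_eq_sub (subset_univ S) (f := fun i => b i x)
  linarith

end aux

/-- `π ∈ 𝒞(N, V_w)` iff `(π, 0)` are valid discounts and raises and, for every
coalition `S`, every optimal allocation remains optimal after every agent `i ∈ S` discounts
its bid by `π i`. -/
theorem stmt4 [Fintype X] [Nonempty X] [Fintype N] [Nonempty N] [DecidableEq N]
    (v b : N → X → ℝ)
    (hb : ∀ i x, 0 ≤ b i x ∧ b i x ≤ v i x)
    (hsupp : ∀ i, ∃ x, 0 < v i x)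
    (hafd : AFD v)
    (π : N → ℝ) :
    CoreW b π ↔
      (Valid v b π (fun _ => 0) ∧
        ∀ S : Finset N, ∀ b' : N → X → ℝ,
          (∀ i ∈ S, b' i = Disc (b i) (π i)) → (∀ i ∉ S, b' i = b i) →
            ∀ x, Optimal b x → Optimal b' x) := by

  constructor
  · intro h
    have hpile : ∀ x, Optimal b x → ∀ i, π i ≤ b i x :=
      fun x hx i => core_pi_le b π h x hx i
    refine ⟨⟨h.1, fun i => le_refl 0, fun i _ => ⟨rfl, fun x hx => hpile x hx i⟩,
      ?_⟩, ?_⟩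
    · rintro i ⟨x, hx, hv⟩
      have hb0 : b i x = 0 := by
        have := (hb i x).1; have := (hb i x).2
        have : v i x ≤ 0 := not_lt.1 hv
        linarith
      have := hpile x hx i
      have := h.1 i
      linarith
    · intro S b' hbS hbSc x hx y
      classical
      set T := S.filter (fun i => π i ≤ b i y) with hT
      have hTS : T ⊆ S := filter_subset _ _
      -- value at x
      have hx' : ∑ i, b' i x = ∑ i, b i x - ∑ i ∈ S, π i :=
        sum_disc_eq b π S b' hbS hbSc x (fun i _ => hpile x hx i)
      -- value at y
      have hsplitS : ∑ i ∈ S, b' i y = ∑ i ∈ T, (b i y - π i) := by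
        rw [← Finset.sum_filter_add_sum_filter_not S (fun i => π i ≤ b i y)
          (fun i => b' i y)]
        have hz : ∑ i ∈ S.filter (fun i => ¬ π i ≤ b i y), b' i y = 0 := by
          refine Finset.sum_eq_zero fun i hi => ?_
          obtain ⟨hiS, hlt⟩ := mem_filter.1 hi
          rw [hbS i hiS]
          exact max_eq_right (by linarith [not_le.1 hlt])
        have he : ∑ i ∈ T, b' i y = ∑ i ∈ T, (b i y - π i) := by
          refine Finset.sum_congr rfl fun i hi => ?_
          obtain ⟨hiS, hle⟩ := mem_filter.1 hi
          rw [hbS i hiS]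
          exact max_eq_left (sub_nonneg.2 hle)
        rw [he, hz, add_zero]
      have hy1 : ∑ i, b' i y
          = ∑ i ∈ univ \ S, b i y + ∑ i ∈ T, b i y - ∑ i ∈ T, π i := by
        have h1 : ∑ i ∈ univ \ S, b' i y = ∑ i ∈ univ \ S, b i y :=
          Finset.sum_congr rfl fun i hi => by rw [hbSc i (mem_sdiff.1 hi).2]
        have h3 := Finset.sum_sdiff_eq_sub (subset_univ S) (f := fun i => b' i y)
        have h4 := Finset.sum_sub_distrib (f := fun i => b i y) (g := π) (s := T)
        linarith
      have hy2 : ∑ i ∈ univ \ S, b i y + ∑ i ∈ T, b i y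
          = ∑ i ∈ univ \ (S \ T), b i y := by
        have h1 := Finset.sum_sdiff_eq_sub (subset_univ S) (f := fun i => b i y)
        have h2 := Finset.sum_sdiff_eq_sub (subset_univ (S \ T)) (f := fun i => b i y)
        have h3 := Finset.sum_sdiff_eq_sub hTS (f := fun i => b i y)
        linarith
      have hy3 : ∑ i ∈ univ \ (S \ T), b i y ≤ Vw b (univ \ (S \ T)) :=
        sum_le_Vw b _ y
      have hcore := h.2 (S \ T)
      have hVw : Vw b univ = ∑ i, b i x := Vw_eq_of_optimal b x hx
      have hsplitpi : ∑ i ∈ S, π i = ∑ i ∈ T, π i + ∑ i ∈ S \ T, π i := by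
        have := Finset.sum_sdiff_eq_sub hTS (f := π)
        linarith
      linarith
  · rintro ⟨hval, hpres⟩
    refine ⟨hval.1, fun S => ?_⟩
    obtain ⟨x, hx⟩ := exists_optimal b
    have hpile : ∀ i, π i ≤ b i x := by
      intro i
      by_cases hv : 0 < v i x
      · exact (hval.2.2.1 i ⟨x, hx, hv⟩).2 x hx
      · have := hval.2.2.2 i ⟨x, hx, hv⟩
        rw [this]; exact (hb i x).1
    classical
    set b' : N → X → ℝ := fun i => if i ∈ S then Disc (b i) (π i) else b i with hb'
    have hbS : ∀ i ∈ S, b' i = Disc (b i) (π i) := fun i hi => by simp [hb', hi]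
    have hbSc : ∀ i ∉ S, b' i = b i := fun i hi => by simp [hb', hi]
    have hopt : Optimal b' x := hpres S b' hbS hbSc x hx
    have hx' : ∑ i, b' i x = ∑ i, b i x - ∑ i ∈ S, π i :=
      sum_disc_eq b π S b' hbS hbSc x (fun i _ => hpile i)
    obtain ⟨y, hy⟩ := exists_Vw b (univ \ S)
    have h1 : ∑ i ∈ univ \ S, b i y ≤ ∑ i, b' i y := by
      have h2 : ∑ i ∈ univ \ S, b' i y = ∑ i ∈ univ \ S, b i y :=
        Finset.sum_congr rfl fun i hi => by rw [hbSc i (mem_sdiff.1 hi).2]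
      have h3 := Finset.sum_sdiff_eq_sub (subset_univ S) (f := fun i => b' i y)
      have h4 : (0:ℝ) ≤ ∑ i ∈ S, b' i y := by
        refine Finset.sum_nonneg fun i hi => ?_
        rw [hbS i hi]; exact le_max_right _ _
      linarith
    have h5 := hopt y
    have hVw : Vw b univ = ∑ i, b i x := Vw_eq_of_optimal b x hx
    linarith
end

section
/- A vector μ ∈ ℝ^N belongs to the core 𝒞(N,V_ℓ) if and only if (0, μ) are valid discounts and raises and, for every coalition T ⊆ N and every choice of raised bids b̄_i with raise μ_i for i ∈ T, every optimal allocation under the original bids remains optimal after every agent i ∈ T raises its bid (i.e., 𝒳*(b) ⊆ 𝒳*(b'), where b'_i = b̄_i for i ∈ T and b'_i = b_i for i ∉ T). -/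
open Finset

variable {X N : Type*}

/-- Helper: existence of a greatest value of a function over a nonempty predicate. -/
lemma exists_isGreatest_aux {X : Type*} [Fintype X] (P : X → Prop) (f : X → ℝ)
    (h : ∃ x, P x) : ∃ r, IsGreatest {r : ℝ | ∃ x, P x ∧ r = f x} r := by
  classical
  obtain ⟨x0, hx0⟩ := h
  have hne : (Finset.univ.filter P).Nonempty := ⟨x0, by simp [hx0]⟩
  refine ⟨(Finset.univ.filter P).sup' hne f, ?_, ?_⟩
  · obtain ⟨x, hx, hfx⟩ := Finset.exists_mem_eq_sup' hne f
    exact ⟨x, by simpa using hx, hfx⟩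
  · rintro r ⟨x, hPx, rfl⟩
    exact Finset.le_sup' f (by simp [hPx])

/-- `μ ∈ 𝒞(N, V_ℓ)` iff `(0, μ)` are valid discounts and raises and, for every
coalition `T` and every choice of raised bids with raises `μ i` for `i ∈ T`, every optimal
allocation remains optimal after every agent `i ∈ T` raises its bid. -/
theorem stmt5 [Fintype X] [Nonempty X] [Fintype N] [Nonempty N] [DecidableEq N]
    (v b : N → X → ℝ)
    (hb : ∀ i x, 0 ≤ b i x ∧ b i x ≤ v i x)
    (hsupp : ∀ i, ∃ x, 0 < v i x)
    (hafd : AFD v)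
    (μ : N → ℝ) :
    CoreL v b μ ↔
      (Valid v b (fun _ => 0) μ ∧
        ∀ T : Finset N, ∀ c : N → X → ℝ,
          (∀ i ∈ T, IsRaised (v i) (b i) (μ i) (c i)) →
            ∀ b' : N → X → ℝ,
              (∀ i ∈ T, b' i = c i) → (∀ i ∉ T, b' i = b i) →
                ∀ x, Optimal b x → Optimal b' x) := by
  classical
  constructor
  · rintro ⟨hμ0, hcore⟩
    have hvalid : Valid v b (fun _ => 0) μ := by
      refine ⟨fun i => le_refl 0, hμ0, fun i hw => ⟨?_, fun x _ => (hb i x).1⟩,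
        fun i _ => rfl⟩
      -- winning agents have zero raise
      obtain ⟨xw, hoptw, hvw⟩ := hw
      obtain ⟨rN, hN⟩ := exists_isGreatest_aux
        (fun x : X => ∀ j, j ∉ (univ : Finset N) → 0 < v j x) (fun x => ∑ j, b j x)
        ⟨xw, fun j hj => absurd (mem_univ j) hj⟩
      obtain ⟨rS, hS⟩ := exists_isGreatest_aux
        (fun x : X => ∀ j, j ∉ (univ \ {i} : Finset N) → 0 < v j x) (fun x => ∑ j, b j x)
        ⟨xw, fun j hj => by
          have : j = i := by simpa using hj
          simpa [this] using hvw⟩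
      have hineq := hcore {i} rN rS hN hS
      simp only [Finset.sum_singleton] at hineq
      obtain ⟨x0, _, hx0⟩ := hN.1
      have h1 : rN ≤ ∑ j, b j xw := hx0 ▸ hoptw x0
      have h2 : (∑ j, b j xw) ≤ rS := hS.2 ⟨xw, fun j hj => by
        have : j = i := by simpa using hj
        simpa [this] using hvw, rfl⟩
      have := hμ0 i
      linarith
    refine ⟨hvalid, ?_⟩
    intro T c hc b' hbT hbnT x hx y
    set S : Finset N := T.filter (fun i => 0 < v i y) with hSdef
    -- Step 1: ∑ b' y ≤ ∑ b y + ∑_{S} μ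
    have step1 : ∑ i, b' i y ≤ ∑ i, b i y + ∑ i ∈ S, μ i := by
      have hpt : ∀ i ∈ (univ : Finset N),
          b' i y ≤ b i y + (if i ∈ S then μ i else 0) := by
        intro i _
        by_cases hiT : i ∈ T
        · rw [hbT i hiT]
          obtain ⟨h1, h2, h3⟩ := hc i hiT
          by_cases hv : 0 < v i y
          · have hiS : i ∈ S := by simp [hSdef, hiT, hv]
            rw [if_pos hiS]
            rcases (hb i y).1.lt_or_eq with hby | hby
            · rw [h1 y hby]
            · have := (h2 y hby.symm).2
              linarith
          · have hiS : i ∉ S := by simp [hSdef, hv]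
            rw [if_neg hiS, h3 y hv]
            have := (hb i y).1
            linarith
        · have hiS : i ∉ S := fun hmem => hiT (Finset.mem_filter.1 hmem).1
          rw [hbnT i hiT, if_neg hiS]
          linarith
      calc ∑ i, b' i y ≤ ∑ i, (b i y + if i ∈ S then μ i else 0) :=
            Finset.sum_le_sum hpt
        _ = ∑ i, b i y + ∑ i ∈ S, μ i := by
            rw [Finset.sum_add_distrib, Finset.sum_ite_mem, Finset.univ_inter]
    -- Step 2: core inequality
    have step2 : ∑ i ∈ S, μ i ≤ (∑ i, b i x) - ∑ i, b i y := by
      obtain ⟨rN, hN⟩ := exists_isGreatest_aux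
        (fun z : X => ∀ j, j ∉ (univ : Finset N) → 0 < v j z) (fun z => ∑ j, b j z)
        ⟨y, fun j hj => absurd (mem_univ j) hj⟩
      obtain ⟨rS, hS⟩ := exists_isGreatest_aux
        (fun z : X => ∀ j, j ∉ (univ \ S : Finset N) → 0 < v j z) (fun z => ∑ j, b j z)
        ⟨y, fun j hj => by
          have hjS : j ∈ S := by simpa using hj
          exact (Finset.mem_filter.1 hjS).2⟩
      have hineq := hcore S rN rS hN hS
      obtain ⟨x0, _, hx0⟩ := hN.1
      have h1 : rN ≤ ∑ j, b j x := hx0 ▸ hx x0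
      have h2 : (∑ j, b j y) ≤ rS := hS.2 ⟨y, fun j hj => by
        have hjS : j ∈ S := by simpa using hj
        exact (Finset.mem_filter.1 hjS).2, rfl⟩
      linarith
    -- Step 3: ∑ b x ≤ ∑ b' x
    have step3 : ∑ i, b i x ≤ ∑ i, b' i x := by
      refine Finset.sum_le_sum fun i _ => ?_
      by_cases hiT : i ∈ T
      · rw [hbT i hiT]
        obtain ⟨h1, h2, h3⟩ := hc i hiT
        rcases (hb i x).1.lt_or_eq with hbx | hbx
        · rw [h1 x hbx]; have := hμ0 i; linarith
        · rw [← hbx]; exact (h2 x hbx.symm).1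
      · rw [hbnT i hiT]
    linarith
  · rintro ⟨⟨_, hμ0, hwin, _⟩, hpres⟩
    refine ⟨hμ0, fun S rN rS hN hS => ?_⟩
    obtain ⟨⟨xN, _, hrN⟩, hNub⟩ := hN
    obtain ⟨⟨xS, hxScond, hrS⟩, hSub⟩ := hS
    have hoptN : Optimal b xN := by
      intro z
      have hz : (∑ j, b j z) ≤ rN := hNub ⟨z, fun j hj => absurd (mem_univ j) hj, rfl⟩
      linarith [hrN ▸ hz]
    set c : N → X → ℝ := fun i z => if 0 < v i z then b i z + μ i else 0 with hcdef
    have hc : ∀ i ∈ S, IsRaised (v i) (b i) (μ i) (c i) := by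
      intro i _
      refine ⟨fun z hbz => ?_, fun z hbz => ?_, fun z hv => if_neg hv⟩
      · have hv : 0 < v i z := lt_of_lt_of_le hbz (hb i z).2
        simp [hcdef, hv]
      · by_cases hv : 0 < v i z
        · simp only [hcdef, if_pos hv, hbz, zero_add]
          exact ⟨hμ0 i, le_refl _⟩
        · simp only [hcdef, if_neg hv]
          exact ⟨le_refl 0, hμ0 i⟩
    set b' : N → X → ℝ := fun i => if i ∈ S then c i else b i with hb'def
    have hoptN' : Optimal b' xN :=
      hpres S c hc b' (fun i hi => by simp [hb'def, hi]) (fun i hi => by simp [hb'def, hi])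
        xN hoptN
    have hkey := hoptN' xS
    have hLHS : ∑ i, b' i xS = ∑ i, b i xS + ∑ i ∈ S, μ i := by
      have : ∀ i ∈ (univ : Finset N), b' i xS = b i xS + (if i ∈ S then μ i else 0) := by
        intro i _
        by_cases hiS : i ∈ S
        · have hv : 0 < v i xS := hxScond i (by simp [hiS])
          simp [hb'def, hcdef, hiS, hv]
        · simp [hb'def, hiS]
      rw [Finset.sum_congr rfl this, Finset.sum_add_distrib, Finset.sum_ite_mem,
        Finset.univ_inter]
    have hRHS : ∑ i, b' i xN ≤ ∑ i, b i xN := by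
      refine Finset.sum_le_sum fun i _ => ?_
      by_cases hiS : i ∈ S
      · by_cases hv : 0 < v i xN
        · have hμi : μ i = 0 := (hwin i ⟨xN, hoptN, hv⟩).1
          simp [hb'def, hcdef, hiS, hv, hμi]
        · simp only [hb'def, hcdef, if_pos hiS, if_neg hv]
          exact (hb i xN).1
      · simp [hb'def, hiS]
    rw [hLHS] at hkey
    have := le_trans hkey hRHS
    rw [hrN, hrS]
    linarith
end

section
/- Suppose (π, μ) belongs to the bicore 𝒞₂(N,V). Then π, μ are valid discounts and raises, and for every pair of coalitions S, T ⊆ N and every choice of raised bids b̄_i with raise μ_i for i ∈ T, every optimal allocation under the original bids remains optimal after every agent i ∈ S discounts its bid by π_i and every agent i ∈ T replaces its bid by b̄_i (i.e., 𝒳*(b) ⊆ 𝒳*(b'), where b'_i is the discounted bid for i ∈ S, b'_i = b̄_i for i ∈ T, and b'_i = b_i otherwise). -/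
open Finset

variable {X N : Type*}

private lemma exists_VVal' [Fintype X] [Fintype N] [DecidableEq N]
    (v b : N → X → ℝ) (S T : Finset N) (y : X) (hy : ∀ i ∈ T, 0 < v i y) :
    ∃ r, VVal v b S T r ∧ ∑ i ∈ S ∪ T, b i y ≤ r := by
  classical
  set F : Finset X := univ.filter (fun z => ∀ i ∈ T, 0 < v i z) with hF
  have hne : F.Nonempty := ⟨y, Finset.mem_filter.2 ⟨Finset.mem_univ y, hy⟩⟩
  refine ⟨F.sup' hne (fun z => ∑ i ∈ S ∪ T, b i z), ⟨?_, ?_⟩, ?_⟩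
  · obtain ⟨z, hz, hz2⟩ := Finset.exists_mem_eq_sup' hne (fun z => ∑ i ∈ S ∪ T, b i z)
    exact ⟨z, (Finset.mem_filter.1 hz).2, hz2⟩
  · rintro r ⟨z, hz1, rfl⟩
    exact Finset.le_sup' (fun z => ∑ i ∈ S ∪ T, b i z)
      (Finset.mem_filter.2 ⟨Finset.mem_univ z, hz1⟩)
  · exact Finset.le_sup' (fun z => ∑ i ∈ S ∪ T, b i z)
      (Finset.mem_filter.2 ⟨Finset.mem_univ y, hy⟩)

private lemma rN_eq' [Fintype X] [Fintype N] [DecidableEq N]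
    (v b : N → X → ℝ) {rN : ℝ} (h : VVal v b univ ∅ rN)
    {x : X} (hx : Optimal b x) : rN = ∑ i, b i x := by
  obtain ⟨⟨z, -, hz⟩, hub⟩ := h
  have h1 : rN ≤ ∑ i, b i x := by
    rw [hz]; simpa using hx z
  have h2 : ∑ i, b i x ≤ rN := hub ⟨x, by simp, by simp⟩
  linarith

/-- if `(π, μ) ∈ 𝒞₂(N, V)`, then `π, μ` are valid discounts and raises, and for
every pair of coalitions `S, T` and every choice of raised bids, every optimal allocation
remains optimal after every agent in `S` discounts and every agent in `T` raises. -/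
theorem stmt7 [Fintype X] [Nonempty X] [Fintype N] [Nonempty N] [DecidableEq N]
    (v b : N → X → ℝ)
    (hb : ∀ i x, 0 ≤ b i x ∧ b i x ≤ v i x)
    (hsupp : ∀ i, ∃ x, 0 < v i x)
    (hafd : AFD v)
    (π μ : N → ℝ)
    (hbicore : Bicore v b π μ) :
    Valid v b π μ ∧
      ∀ (S T : Finset N) (c : N → X → ℝ),
        (∀ i ∈ T, IsRaised (v i) (b i) (μ i) (c i)) →
          ∀ b' : N → X → ℝ,
            (∀ i ∈ S, b' i = Disc (b i) (π i)) → (∀ i ∈ T, b' i = c i) →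
              (∀ i, i ∉ S → i ∉ T → b' i = b i) →
                ∀ x, Optimal b x → Optimal b' x := by
  classical
  obtain ⟨hπ0, hμ0, hB⟩ := hbicore
  obtain ⟨rN, hrN, -⟩ := exists_VVal' v b univ ∅ (Classical.arbitrary X) (by simp)
  -- key: π i ≤ b i x for every i and every optimal x
  have hple : ∀ i x, Optimal b x → π i ≤ b i x := by
    intro i x hx
    obtain ⟨r, hr, hry⟩ := exists_VVal' v b (univ \ {i}) ∅ x (by simp)
    have hineq := hB {i} ∅ rN r hrN hr
    simp only [Finset.sum_singleton, Finset.sum_empty, add_zero] at hineq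
    have h2 : rN = ∑ j, b j x := rN_eq' v b hrN hx
    have h3 : ∑ j ∈ (univ \ {i}) ∪ ∅, b j x = ∑ j, b j x - b i x := by
      rw [Finset.union_empty, Finset.sum_sdiff_eq_sub (Finset.subset_univ _)]
      simp
    rw [h3] at hry
    linarith
  have hvalid : Valid v b π μ := by
    refine ⟨hπ0, hμ0, fun i hi => ⟨?_, fun x hx => hple i x hx⟩, fun i hi => ?_⟩
    · obtain ⟨x, hx, hvix⟩ := hi
      obtain ⟨r, hr, hry⟩ := exists_VVal' v b (univ \ ∅) {i} x
        (by intro j hj; rw [Finset.mem_singleton] at hj; subst hj; exact hvix)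
      have hineq := hB ∅ {i} rN r hrN hr
      simp only [Finset.sum_singleton, Finset.sum_empty, zero_add] at hineq
      have h2 : rN = ∑ j, b j x := rN_eq' v b hrN hx
      have h3 : ∑ j ∈ (univ \ ∅) ∪ {i}, b j x = ∑ j, b j x := by
        congr 1
        simp
      rw [h3] at hry
      exact le_antisymm (by linarith) (hμ0 i)
    · obtain ⟨x, hx, hvix⟩ := hi
      have hbx : b i x = 0 :=
        le_antisymm ((hb i x).2.trans (not_lt.1 hvix)) (hb i x).1
      have := hple i x hx
      rw [hbx] at this
      exact le_antisymm this (hπ0 i)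
  refine ⟨hvalid, fun S T c hc b' hS hT hO x hx y => ?_⟩
  -- the sets of agents used in the accounting
  set A : Finset N := univ.filter (fun i => i ∈ S ∧ i ∉ T ∧ 0 < v i x) with hA
  set A₁ : Finset N := A.filter (fun i => b i y ≤ π i) with hA₁
  set A₂ : Finset N := A.filter (fun i => ¬ b i y ≤ π i) with hA₂
  set T' : Finset N := T.filter (fun i => 0 < v i y) with hT'
  have hA₁T : ∀ i ∈ A₁, i ∉ T := by
    intro i hi
    exact ((Finset.mem_filter.1 ((Finset.mem_filter.1 hi).1)).2).2.1
  have hA₂T : ∀ i ∈ A₂, i ∉ T := by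
    intro i hi
    exact ((Finset.mem_filter.1 ((Finset.mem_filter.1 hi).1)).2).2.1
  -- value of the new bids at x
  have hxpt : ∀ i, b' i x = b i x - (if i ∈ A then π i else 0) := by
    intro i
    by_cases hiT : i ∈ T
    · have hiA : i ∉ A := by simp [hA, hiT]
      rw [if_neg hiA, sub_zero, hT i hiT]
      by_cases hv : 0 < v i x
      · have hμi : μ i = 0 := (hvalid.2.2.1 i ⟨x, hx, hv⟩).1
        rcases (hb i x).1.lt_or_eq with hbx | hbx
        · rw [(hc i hiT).1 x hbx, hμi, add_zero]
        · have h0 : b i x = 0 := hbx.symm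
          have h1 := (hc i hiT).2.1 x h0
          rw [hμi] at h1
          rw [h0]
          linarith [h1.1, h1.2]
      · have h0 : b i x = 0 :=
          le_antisymm ((hb i x).2.trans (not_lt.1 hv)) (hb i x).1
        rw [(hc i hiT).2.2 x hv, h0]
    · by_cases hiS : i ∈ S
      · rw [hS i hiS]
        show max (b i x - π i) 0 = _
        by_cases hv : 0 < v i x
        · have hiA : i ∈ A := by simp [hA, hiS, hiT, hv]
          rw [if_pos hiA, max_eq_left (sub_nonneg.2 (hple i x hx))]
        · have hiA : i ∉ A := by simp [hA, hv]
          have hπi : π i = 0 := hvalid.2.2.2 i ⟨x, hx, hv⟩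
          simp only [if_neg hiA, hπi, sub_zero]
          exact max_eq_left (hb i x).1
      · have hiA : i ∉ A := by simp [hA, hiS]
        rw [if_neg hiA, sub_zero, hO i hiS hiT]
  have hxeq : ∑ i, b' i x = ∑ i, b i x - ∑ i ∈ A, π i := by
    rw [← Finset.univ_inter A, ← Finset.sum_ite_mem, ← Finset.sum_sub_distrib]
    exact Finset.sum_congr rfl fun i _ => hxpt i
  -- pointwise bound at y
  have hypt : ∀ i, b' i y ≤
      (if i ∈ A₁ then 0 else b i y) + (if i ∈ T' then μ i else 0)
        - (if i ∈ A₂ then π i else 0) := by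
    intro i
    by_cases hiT : i ∈ T
    · have h1 : i ∉ A₁ := fun h => hA₁T i h hiT
      have h2 : i ∉ A₂ := fun h => hA₂T i h hiT
      rw [if_neg h1, if_neg h2, sub_zero, hT i hiT]
      by_cases hv : 0 < v i y
      · have hiT' : i ∈ T' := by simp [hT', hiT, hv]
        rw [if_pos hiT']
        rcases (hb i y).1.lt_or_eq with hby | hby
        · rw [(hc i hiT).1 y hby]
        · have h0 : b i y = 0 := hby.symm
          have h3 := (hc i hiT).2.1 y h0
          rw [h0, zero_add]
          exact h3.2
      · have hiT' : i ∉ T' := by simp [hT', hv]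
        rw [if_neg hiT', add_zero, (hc i hiT).2.2 y hv]
        exact (hb i y).1
    · have hiT' : i ∉ T' := by
        intro h
        exact hiT (Finset.mem_filter.1 h).1
      rw [if_neg hiT', add_zero]
      by_cases hiS : i ∈ S
      · rw [hS i hiS]
        show max (b i y - π i) 0 ≤ _
        by_cases hiA : i ∈ A
        · by_cases hle : b i y ≤ π i
          · have h1 : i ∈ A₁ := by simp [hA₁, hiA, hle]
            have h2 : i ∉ A₂ := by simp [hA₂, hle]
            rw [if_pos h1, if_neg h2, sub_zero, max_le_iff]
            constructor <;> linarith
          · have h1 : i ∉ A₁ := by simp [hA₁, hle]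
            have h2 : i ∈ A₂ := Finset.mem_filter.2 ⟨hiA, hle⟩
            rw [if_neg h1, if_pos h2, max_le_iff]
            exact ⟨le_refl _, by linarith [not_le.1 hle]⟩
        · have h1 : i ∉ A₁ := by
            intro h
            exact hiA (Finset.mem_filter.1 h).1
          have h2 : i ∉ A₂ := by
            intro h
            exact hiA (Finset.mem_filter.1 h).1
          rw [if_neg h1, if_neg h2, sub_zero, max_le_iff]
          constructor <;> linarith [(hb i y).1, hπ0 i]
      · have h1 : i ∉ A₁ := by
          intro h
          exact hiS (Finset.mem_filter.1 (Finset.mem_filter.1 h).1).2.1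
        have h2 : i ∉ A₂ := by
          intro h
          exact hiS (Finset.mem_filter.1 (Finset.mem_filter.1 h).1).2.1
        rw [if_neg h1, if_neg h2, sub_zero, hO i hiS hiT]
  have hysum : ∑ i, b' i y ≤
      (∑ i ∈ univ \ A₁, b i y) + (∑ i ∈ T', μ i) - ∑ i ∈ A₂, π i := by
    have h1 : ∑ i, (if i ∈ A₁ then (0:ℝ) else b i y) = ∑ i ∈ univ \ A₁, b i y := by
      rw [Finset.sum_ite, Finset.sum_const_zero, zero_add]
      congr 1
      ext i
      simp [Finset.mem_sdiff]
    calc ∑ i, b' i y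
        ≤ ∑ i, ((if i ∈ A₁ then 0 else b i y) + (if i ∈ T' then μ i else 0)
            - (if i ∈ A₂ then π i else 0)) := Finset.sum_le_sum fun i _ => hypt i
      _ = (∑ i ∈ univ \ A₁, b i y) + (∑ i ∈ T', μ i) - ∑ i ∈ A₂, π i := by
          rw [Finset.sum_sub_distrib, Finset.sum_add_distrib, h1,
            Finset.sum_ite_mem univ T' μ, Finset.sum_ite_mem univ A₂ π,
            Finset.univ_inter, Finset.univ_inter]
  -- apply the bicore inequality with S = A₁, T = T'
  obtain ⟨r, hr, hry⟩ := exists_VVal' v b (univ \ A₁) T' y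
    (fun i hi => (Finset.mem_filter.1 hi).2)
  have hineq := hB A₁ T' rN r hrN hr
  have hUeq : (univ \ A₁) ∪ T' = univ \ A₁ := by
    apply Finset.union_eq_left.2
    intro i hi
    exact Finset.mem_sdiff.2 ⟨Finset.mem_univ i, fun h => hA₁T i h (Finset.mem_filter.1 hi).1⟩
  rw [hUeq] at hry
  have hrNx : rN = ∑ i, b i x := rN_eq' v b hrN hx
  have hsplit : ∑ i ∈ A₁, π i + ∑ i ∈ A₂, π i = ∑ i ∈ A, π i :=
    Finset.sum_filter_add_sum_filter_not A (fun i => b i y ≤ π i) π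
  rw [hxeq]
  linarith
end

section
/- For any μ ∈ ℝ^N, the pair (0, μ) belongs to the bicore 𝒞₂(N,V) if and only if μ belongs to the core 𝒞(N,V_ℓ). -/
open Finset

variable {X N : Type*}

/-- `(0, μ) ∈ 𝒞₂(N, V)` if and only if `μ ∈ 𝒞(N, V_ℓ)`. -/
theorem stmt9 [Fintype X] [Nonempty X] [Fintype N] [Nonempty N] [DecidableEq N]
    (v b : N → X → ℝ)
    (hb : ∀ i x, 0 ≤ b i x ∧ b i x ≤ v i x)
    (hsupp : ∀ i, ∃ x, 0 < v i x)
    (μ : N → ℝ) :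
    Bicore v b (fun _ => 0) μ ↔ CoreL v b μ := by
  classical
  -- set equalities
  have setN : {r : ℝ | ∃ x : X, (∀ i ∈ (∅ : Finset N), 0 < v i x) ∧ r = ∑ i ∈ univ ∪ ∅, b i x}
      = {r : ℝ | ∃ x : X, (∀ i, i ∉ (univ : Finset N) → 0 < v i x) ∧ r = ∑ i, b i x} := by
    ext r; simp
  have setT : ∀ T : Finset N,
      {r : ℝ | ∃ x : X, (∀ i ∈ T, 0 < v i x) ∧ r = ∑ i ∈ univ ∪ T, b i x}
      = {r : ℝ | ∃ x : X, (∀ i, i ∉ univ \ T → 0 < v i x) ∧ r = ∑ i, b i x} := by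
    intro T
    ext r
    constructor
    · rintro ⟨x, hx, rfl⟩
      exact ⟨x, fun i hi => hx i (by simpa using hi),
        by rw [Finset.union_eq_left.mpr (Finset.subset_univ T)]⟩
    · rintro ⟨x, hx, rfl⟩
      exact ⟨x, fun i hi => hx i (by simp [hi]),
        by rw [Finset.union_eq_left.mpr (Finset.subset_univ T)]⟩
  have existsVl : ∀ T : Finset N, (∃ x : X, ∀ i ∈ T, 0 < v i x) →
      ∃ r, VlVal v b (univ \ T) r := by
    intro T ⟨x0, hx0⟩
    set s : Finset X := univ.filter (fun x => ∀ i ∈ T, 0 < v i x) with hs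
    have hsne : s.Nonempty := ⟨x0, Finset.mem_filter.mpr ⟨Finset.mem_univ _, hx0⟩⟩
    obtain ⟨z, hz, hmax⟩ := s.exists_max_image (fun x => ∑ i, b i x) hsne
    have hz' : ∀ i ∈ T, 0 < v i z := by simpa [hs] using hz
    refine ⟨∑ i, b i z, ⟨z, fun i hi => hz' i (by simpa using hi), rfl⟩, ?_⟩
    rintro r ⟨y, hy, rfl⟩
    exact hmax y (by simp [hs]; exact fun i hi => hy i (by simp [hi]))
  constructor
  · rintro ⟨hπ, hμ, h⟩
    refine ⟨hμ, ?_⟩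
    intro S rN rS hN hS
    have hN' : VVal v b univ ∅ rN := by
      unfold VVal; rw [setN]; exact hN
    have hS' : VVal v b (univ \ (∅ : Finset N)) S rS := by
      unfold VVal
      rw [Finset.sdiff_empty, setT S]
      exact hS
    have := h ∅ S rN rS hN' hS'
    simpa using this
  · rintro ⟨hμ, h⟩
    refine ⟨fun _ => le_refl 0, hμ, ?_⟩
    intro S T rN r hN hr
    have hN' : VlVal v b univ rN := by
      unfold VlVal; rw [← setN]; exact hN
    obtain ⟨x, hx, hrx⟩ := hr.1
    obtain ⟨rT, hrT⟩ := existsVl T ⟨x, hx⟩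
    have hle : r ≤ rT := by
      have h1 : r ≤ ∑ i, b i x := by
        rw [hrx]
        exact Finset.sum_le_sum_of_subset_of_nonneg (Finset.subset_univ _)
          (fun i _ _ => (hb i x).1)
      have h2 : (∑ i, b i x) ∈ {r : ℝ | ∃ y : X, (∀ i, i ∉ univ \ T → 0 < v i y) ∧ r = ∑ i, b i y} :=
        ⟨x, fun i hi => hx i (by simpa using hi), rfl⟩
      exact h1.trans (hrT.2 h2)
    have := h T rN rT hN' hrT
    simp only [Finset.sum_const_zero, zero_add]
    linarith
end

section
/- In the assignment model: the set of optimal solutions to the dual linear program D(N,∅) is closed under the meet operation (π¹,μ¹,p¹) ∧ (π²,μ²,p²) = (max{π¹,π²}, min{μ¹,μ²}, min{p¹,p²}) and the join operation (π¹,μ¹,p¹) ∨ (π²,μ²,p²) = (min{π¹,π²}, max{μ¹,μ²}, max{p¹,p²}), where max and min are taken componentwise; hence it forms a lattice under these operations. -/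
open Finset

variable {N M : Type*}

/-- A matching: a set of agent–item pairs in which each agent and each item
appears at most once. -/
def IsMatching (x : Finset (N × M)) : Prop :=
  (∀ p ∈ x, ∀ q ∈ x, p.1 = q.1 → p = q) ∧
  (∀ p ∈ x, ∀ q ∈ x, p.2 = q.2 → p = q)

/-- `r` is the value `V(S,T)` in the assignment model: the maximum of the total bid over
matchings in which every matched agent lies in `S ∪ T` and every agent of `T` is matched. -/
def AVal [DecidableEq N] (b : N → M → ℝ) (S T : Finset N) (r : ℝ) : Prop :=
  IsGreatest {r : ℝ | ∃ x : Finset (N × M), IsMatching x ∧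
    (∀ p ∈ x, p.1 ∈ S ∪ T) ∧ (∀ i ∈ T, ∃ j, (i, j) ∈ x) ∧
    r = ∑ p ∈ x, b p.1 p.2} r

/-- Feasibility for the dual linear program. -/
def DualFeasible [Fintype N] [Fintype M] (b : N → M → ℝ)
    (π μ : N → ℝ) (p : M → ℝ) : Prop :=
  (∀ i, 0 ≤ π i) ∧ (∀ i, 0 ≤ μ i) ∧ (∀ j, 0 ≤ p j) ∧
  ∀ i j, b i j - p j ≤ π i - μ i

/-- The objective of the dual linear program `D(N, ∅)`. -/
def DualObj [Fintype N] [Fintype M] (π : N → ℝ) (p : M → ℝ) : ℝ :=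
  ∑ j, p j + ∑ i, π i

/-- The objective of the parametrized dual linear program `D(S, T)`. -/
def DualObjST [Fintype M] [DecidableEq N] (S T : Finset N) (π μ : N → ℝ) (p : M → ℝ) : ℝ :=
  ∑ j, p j + ∑ i ∈ S ∪ T, π i - ∑ i ∈ T, μ i

/-- `(π, μ, p)` is an optimal solution to the dual linear program `D(N, ∅)`. -/
def DualOptimal [Fintype N] [Fintype M] (b : N → M → ℝ)
    (π μ : N → ℝ) (p : M → ℝ) : Prop :=
  DualFeasible b π μ p ∧
  ∀ π' μ' p', DualFeasible b π' μ' p' → DualObj π p ≤ DualObj π' p'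

/-- The bicore `𝒞₂(N, V)` in the assignment model. -/
def AssignBicore [Fintype N] [DecidableEq N] [Fintype M] (b : N → M → ℝ)
    (π μ : N → ℝ) : Prop :=
  (∀ i, 0 ≤ π i) ∧ (∀ i, 0 ≤ μ i) ∧
  ∀ (S T : Finset N) (rN r : ℝ), AVal b univ ∅ rN → AVal b (univ \ S) T r →
    ∑ i ∈ S, π i + ∑ j ∈ T, μ j ≤ rN - r

/-- At an optimal dual solution, for each agent either `μ i = 0` or `π i = 0`. -/
lemma dual_dichotomy [Fintype N] [Fintype M] [Nonempty M] (b : N → M → ℝ)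
    (π μ : N → ℝ) (p : M → ℝ) (h : DualOptimal b π μ p) (i : N) :
    μ i = 0 ∨ π i = 0 := by
  obtain ⟨⟨hπ, hμ, hp, hc⟩, hopt⟩ := h
  set g : N → ℝ := fun i => max 0 ((univ : Finset M).sup' univ_nonempty fun j => b i j - p j)
    with hg
  have hgfeas : DualFeasible b g (fun _ => 0) p := by
    refine ⟨fun i => le_max_left _ _, fun _ => le_refl 0, hp, fun i j => ?_⟩
    have h0 : b i j - p j ≤ (univ : Finset M).sup' univ_nonempty fun j => b i j - p j :=
      Finset.le_sup' (fun j => b i j - p j) (mem_univ j)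
    simp only [hg, sub_zero]
    exact h0.trans (le_max_right _ _)
  have hgle : ∀ i, g i ≤ π i := by
    intro i
    have h1 : (univ : Finset M).sup' univ_nonempty (fun j => b i j - p j) ≤ π i := by
      apply Finset.sup'_le
      intro j _
      have := hc i j
      have := hμ i
      linarith
    exact max_le (hπ i) h1
  have hsle : DualObj π p ≤ DualObj g p := hopt g (fun _ => 0) p hgfeas
  have hsum : ∑ i, π i = ∑ i, g i := by
    have h1 : ∑ i, g i ≤ ∑ i, π i := Finset.sum_le_sum fun i _ => hgle i
    have h2 : ∑ i, π i ≤ ∑ i, g i := by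
      have := hsle; simp only [DualObj] at this; linarith
    linarith
  have hpg : ∀ i, π i = g i := by
    intro i
    have := (Finset.sum_eq_sum_iff_of_le (s := (univ : Finset N))
      (fun i _ => hgle i)).mp hsum.symm
    exact (this i (mem_univ i)).symm
  by_contra hcon
  push_neg at hcon
  obtain ⟨hμne, hπne⟩ := hcon
  have hμpos : 0 < μ i := lt_of_le_of_ne (hμ i) (Ne.symm hμne)
  have hπpos : 0 < π i := lt_of_le_of_ne (hπ i) (Ne.symm hπne)
  have hgi : g i = (univ : Finset M).sup' univ_nonempty fun j => b i j - p j := by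
    have : 0 < g i := by rw [← hpg i]; exact hπpos
    rcases max_cases (0 : ℝ) ((univ : Finset M).sup' univ_nonempty fun j => b i j - p j) with
      ⟨h1, h2⟩ | ⟨h1, h2⟩
    · exfalso; rw [hg] at this; simp only at this; rw [h1] at this; exact lt_irrefl 0 this
    · exact h1
  obtain ⟨j₀, _, hj₀⟩ := Finset.exists_mem_eq_sup' (univ_nonempty (α := M))
    (fun j => b i j - p j)
  have hπi : π i = b i j₀ - p j₀ := by rw [hpg i, hgi, hj₀]
  have := hc i j₀
  linarith

/-- the set of optimal solutions to the dual linear program `D(N, ∅)` is closed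
under the meet operation `(max π, min μ, min p)` and the join operation `(min π, max μ, max p)`,
hence forms a lattice under these operations. -/
theorem stmt16 [Fintype N] [DecidableEq N] [Fintype M] [Nonempty M]
    (hmn : Fintype.card M ≤ Fintype.card N)
    (b : N → M → ℝ) (hb : ∀ i j, 0 ≤ b i j)
    (π₁ μ₁ : N → ℝ) (p₁ : M → ℝ) (π₂ μ₂ : N → ℝ) (p₂ : M → ℝ)
    (h₁ : DualOptimal b π₁ μ₁ p₁) (h₂ : DualOptimal b π₂ μ₂ p₂) :
    DualOptimal b (fun i => max (π₁ i) (π₂ i)) (fun i => min (μ₁ i) (μ₂ i))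
        (fun j => min (p₁ j) (p₂ j)) ∧
      DualOptimal b (fun i => min (π₁ i) (π₂ i)) (fun i => max (μ₁ i) (μ₂ i))
        (fun j => max (p₁ j) (p₂ j)) := by
  obtain ⟨⟨hπ1, hμ1, hp1, hc1⟩, hopt1⟩ := h₁
  obtain ⟨⟨hπ2, hμ2, hp2, hc2⟩, hopt2⟩ := h₂
  -- feasibility of the meet
  have hmeet : DualFeasible b (fun i => max (π₁ i) (π₂ i)) (fun i => min (μ₁ i) (μ₂ i))
      (fun j => min (p₁ j) (p₂ j)) := by
    refine ⟨fun i => le_trans (hπ1 i) (le_max_left _ _),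
      fun i => le_min (hμ1 i) (hμ2 i),
      fun j => le_min (hp1 j) (hp2 j), fun i j => ?_⟩
    rcases le_total (p₁ j) (p₂ j) with hle | hle
    · have h1 := hc1 i j
      have h2 : min (μ₁ i) (μ₂ i) ≤ μ₁ i := min_le_left _ _
      have h3 : π₁ i ≤ max (π₁ i) (π₂ i) := le_max_left _ _
      have h4 : min (p₁ j) (p₂ j) = p₁ j := min_eq_left hle
      simp only [h4]; linarith
    · have h1 := hc2 i j
      have h2 : min (μ₁ i) (μ₂ i) ≤ μ₂ i := min_le_right _ _
      have h3 : π₂ i ≤ max (π₁ i) (π₂ i) := le_max_right _ _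
      have h4 : min (p₁ j) (p₂ j) = p₂ j := min_eq_right hle
      simp only [h4]; linarith
  -- feasibility of the join
  have hjoin : DualFeasible b (fun i => min (π₁ i) (π₂ i)) (fun i => max (μ₁ i) (μ₂ i))
      (fun j => max (p₁ j) (p₂ j)) := by
    refine ⟨fun i => le_min (hπ1 i) (hπ2 i),
      fun i => le_trans (hμ1 i) (le_max_left _ _),
      fun j => le_trans (hp1 j) (le_max_left _ _), fun i j => ?_⟩
    have hmp1 : p₁ j ≤ max (p₁ j) (p₂ j) := le_max_left _ _
    have hmp2 : p₂ j ≤ max (p₁ j) (p₂ j) := le_max_right _ _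
    rcases le_total (μ₁ i) (μ₂ i) with hle | hle
    · have hmax : max (μ₁ i) (μ₂ i) = μ₂ i := max_eq_right hle
      simp only [hmax]
      rcases dual_dichotomy b π₂ μ₂ p₂ ⟨⟨hπ2, hμ2, hp2, hc2⟩, hopt2⟩ i with hz | hz
      · -- μ₂ i = 0
        have e1 : b i j - p₁ j ≤ π₁ i := by have := hc1 i j; have := hμ1 i; linarith
        have e2 : b i j - p₂ j ≤ π₂ i := by have := hc2 i j; have := hμ2 i; linarith
        have : b i j - max (p₁ j) (p₂ j) ≤ min (π₁ i) (π₂ i) := by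
          apply le_min <;> linarith
        rw [hz]; linarith
      · -- π₂ i = 0, so min π = π₂
        have hmin : min (π₁ i) (π₂ i) = π₂ i := min_eq_right (hz ▸ hπ1 i)
        rw [hmin]
        have := hc2 i j; linarith
    · have hmax : max (μ₁ i) (μ₂ i) = μ₁ i := max_eq_left hle
      simp only [hmax]
      rcases dual_dichotomy b π₁ μ₁ p₁ ⟨⟨hπ1, hμ1, hp1, hc1⟩, hopt1⟩ i with hz | hz
      · have e1 : b i j - p₁ j ≤ π₁ i := by have := hc1 i j; have := hμ1 i; linarith
        have e2 : b i j - p₂ j ≤ π₂ i := by have := hc2 i j; have := hμ2 i; linarith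
        have : b i j - max (p₁ j) (p₂ j) ≤ min (π₁ i) (π₂ i) := by
          apply le_min <;> linarith
        rw [hz]; linarith
      · have hmin : min (π₁ i) (π₂ i) = π₁ i := min_eq_left (hz ▸ hπ2 i)
        rw [hmin]
        have := hc1 i j; linarith
  -- objectives
  have hv : DualObj π₁ p₁ = DualObj π₂ p₂ :=
    le_antisymm (hopt1 π₂ μ₂ p₂ ⟨hπ2, hμ2, hp2, hc2⟩) (hopt2 π₁ μ₁ p₁ ⟨hπ1, hμ1, hp1, hc1⟩)
  have hsumid : DualObj (fun i => max (π₁ i) (π₂ i)) (fun j => min (p₁ j) (p₂ j)) +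
      DualObj (fun i => min (π₁ i) (π₂ i)) (fun j => max (p₁ j) (p₂ j)) =
      DualObj π₁ p₁ + DualObj π₂ p₂ := by
    simp only [DualObj, ← Finset.sum_add_distrib]
    have e1 : ∑ j, (min (p₁ j) (p₂ j) + max (p₁ j) (p₂ j)) = ∑ j, (p₁ j + p₂ j) :=
      Finset.sum_congr rfl fun j _ => min_add_max _ _
    have e2 : ∑ i, (max (π₁ i) (π₂ i) + min (π₁ i) (π₂ i)) = ∑ i, (π₁ i + π₂ i) :=
      Finset.sum_congr rfl fun i _ => by rw [add_comm, min_add_max]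
    rw [show (∑ j, min (p₁ j) (p₂ j) + ∑ i, max (π₁ i) (π₂ i)) +
        (∑ j, max (p₁ j) (p₂ j) + ∑ i, min (π₁ i) (π₂ i)) =
        (∑ j, (min (p₁ j) (p₂ j) + max (p₁ j) (p₂ j))) +
        (∑ i, (max (π₁ i) (π₂ i) + min (π₁ i) (π₂ i))) by
      rw [Finset.sum_add_distrib, Finset.sum_add_distrib]; ring]
    rw [e1, e2, Finset.sum_add_distrib, Finset.sum_add_distrib]
    ring
  have hle1 : DualObj π₁ p₁ ≤ DualObj (fun i => max (π₁ i) (π₂ i))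
      (fun j => min (p₁ j) (p₂ j)) := hopt1 _ _ _ hmeet
  have hle2 : DualObj π₁ p₁ ≤ DualObj (fun i => min (π₁ i) (π₂ i))
      (fun j => max (p₁ j) (p₂ j)) := hopt1 _ _ _ hjoin
  have heq1 : DualObj (fun i => max (π₁ i) (π₂ i)) (fun j => min (p₁ j) (p₂ j)) =
      DualObj π₁ p₁ := by linarith
  have heq2 : DualObj (fun i => min (π₁ i) (π₂ i)) (fun j => max (p₁ j) (p₂ j)) =
      DualObj π₁ p₁ := by linarith
  exact ⟨⟨hmeet, fun π' μ' p' hf => heq1 ▸ hopt1 π' μ' p' hf⟩,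
    ⟨hjoin, fun π' μ' p' hf => heq2 ▸ hopt1 π' μ' p' hf⟩⟩
end

section
/- In the assignment model: there exists an optimal solution (π*, μ*, p*) to the dual linear program D(N,∅) that is the smallest element of the lattice of optimal dual solutions, i.e., every optimal dual solution (π, μ, p) satisfies π ≤ π*, μ* ≤ μ, and p* ≤ p componentwise; moreover, at this solution π*_i equals agent i's VCG discount V_w(N) − V_w(N∖{i}) for every i ∈ N. -/
open Finset

variable {N M : Type*}

set_option linter.unusedSectionVars false

namespace S17

open scoped Classical

variable [Fintype N] [Fintype M] [DecidableEq N] [DecidableEq M]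

noncomputable def vals (b : N → M → ℝ) (S : Finset N) (J : Finset M) : Finset ℝ :=
  ((S ×ˢ J).powerset.filter fun x => IsMatching x).image fun x => ∑ p ∈ x, b p.1 p.2

lemma vals_nonempty (b : N → M → ℝ) (S : Finset N) (J : Finset M) : (vals b S J).Nonempty := by
  refine ⟨0, ?_⟩
  simp only [vals, mem_image, mem_filter, mem_powerset]
  exact ⟨∅, ⟨empty_subset _, ⟨by simp, by simp⟩⟩, by simp⟩

noncomputable def Val (b : N → M → ℝ) (S : Finset N) (J : Finset M) : ℝ :=
  (vals b S J).max' (vals_nonempty b S J)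

lemma mem_vals_iff {b : N → M → ℝ} {S : Finset N} {J : Finset M} {r : ℝ} :
    r ∈ vals b S J ↔ ∃ x : Finset (N × M), IsMatching x ∧ (∀ p ∈ x, p.1 ∈ S ∧ p.2 ∈ J) ∧
      r = ∑ p ∈ x, b p.1 p.2 := by
  simp only [vals, mem_image, mem_filter, mem_powerset]
  constructor
  · rintro ⟨x, ⟨hx, hm⟩, rfl⟩
    exact ⟨x, hm, fun p hp => by simpa using mem_product.1 (hx hp), rfl⟩
  · rintro ⟨x, hm, hx, rfl⟩
    exact ⟨x, ⟨fun p hp => mem_product.2 (hx p hp), hm⟩, rfl⟩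

lemma le_Val {b : N → M → ℝ} {S : Finset N} {J : Finset M} {x : Finset (N × M)}
    (hm : IsMatching x) (hx : ∀ p ∈ x, p.1 ∈ S ∧ p.2 ∈ J) :
    ∑ p ∈ x, b p.1 p.2 ≤ Val b S J :=
  le_max' _ _ (mem_vals_iff.2 ⟨x, hm, hx, rfl⟩)

lemma Val_attained (b : N → M → ℝ) (S : Finset N) (J : Finset M) :
    ∃ x : Finset (N × M), IsMatching x ∧ (∀ p ∈ x, p.1 ∈ S ∧ p.2 ∈ J) ∧
      Val b S J = ∑ p ∈ x, b p.1 p.2 :=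
  mem_vals_iff.1 ((vals b S J).max'_mem (vals_nonempty b S J))

lemma Val_nonneg (b : N → M → ℝ) (S : Finset N) (J : Finset M) : 0 ≤ Val b S J :=
  le_trans (by simp) (le_Val (x := ∅) ⟨by simp, by simp⟩ (by simp))

lemma Val_mono {b : N → M → ℝ} {S S' : Finset N} {J : Finset M} (h : S ⊆ S') :
    Val b S J ≤ Val b S' J := by
  obtain ⟨x, hm, hx, hv⟩ := Val_attained b S J
  rw [hv]
  exact le_Val hm fun p hp => ⟨h (hx p hp).1, (hx p hp).2⟩

/-- Key combinatorial inequality: adding the pair `(i,j)` to a matching. -/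
lemma Val_pair {b : N → M → ℝ} {S : Finset N} {J : Finset M} {i : N} {j : M}
    (hi : i ∈ S) (hj : j ∈ J) :
    Val b (S.erase i) (J.erase j) + b i j ≤ Val b S J := by
  obtain ⟨x, hm, hx, hv⟩ := Val_attained b (S.erase i) (J.erase j)
  have hij : (i, j) ∉ x := fun h => (mem_erase.1 (hx _ h).1).1 rfl
  have hm' : IsMatching (insert (i, j) x) := by
    constructor
    · intro p hp q hq hpq
      rcases mem_insert.1 hp with rfl | hp <;> rcases mem_insert.1 hq with rfl | hq
      · rfl
      · exact absurd ((hx q hq).1) (by simp [← hpq])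
      · exact absurd ((hx p hp).1) (by simp [hpq])
      · exact hm.1 p hp q hq hpq
    · intro p hp q hq hpq
      rcases mem_insert.1 hp with rfl | hp <;> rcases mem_insert.1 hq with rfl | hq
      · rfl
      · exact absurd ((hx q hq).2) (by simp [← hpq])
      · exact absurd ((hx p hp).2) (by simp [hpq])
      · exact hm.2 p hp q hq hpq
  have hsub : ∀ p ∈ insert (i, j) x, p.1 ∈ S ∧ p.2 ∈ J := by
    intro p hp
    rcases mem_insert.1 hp with rfl | hp
    · exact ⟨hi, hj⟩
    · exact ⟨erase_subset _ _ (hx p hp).1, erase_subset _ _ (hx p hp).2⟩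
  have := le_Val (b := b) hm' hsub
  rw [sum_insert hij] at this
  rw [hv]
  linarith


/-- Dual feasibility for the subproblem with agents `S` and items `J`. -/
def DF (b : N → M → ℝ) (S : Finset N) (J : Finset M) (π : N → ℝ) (p : M → ℝ) : Prop :=
  (∀ i, 0 ≤ π i) ∧ (∀ j, 0 ≤ p j) ∧ ∀ i ∈ S, ∀ j ∈ J, b i j ≤ π i + p j

/-- Dual objective for the subproblem. -/
def Ob (S : Finset N) (J : Finset M) (π : N → ℝ) (p : M → ℝ) : ℝ :=
  ∑ i ∈ S, π i + ∑ j ∈ J, p j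

/-- Dual optimality (objective equals the primal optimum; by weak duality this is the min). -/
def DOpt (b : N → M → ℝ) (S : Finset N) (J : Finset M) (π : N → ℝ) (p : M → ℝ) : Prop :=
  DF b S J π p ∧ Ob S J π p = Val b S J

/-- Weak duality. -/
lemma weak_duality {b : N → M → ℝ} {S : Finset N} {J : Finset M} {π : N → ℝ} {p : M → ℝ}
    (h : DF b S J π p) : Val b S J ≤ Ob S J π p := by
  obtain ⟨x, hm, hx, hv⟩ := Val_attained b S J
  rw [hv]
  have h1 : ∑ q ∈ x, b q.1 q.2 ≤ ∑ q ∈ x, (π q.1 + p q.2) :=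
    sum_le_sum fun q hq => h.2.2 q.1 (hx q hq).1 q.2 (hx q hq).2
  have h2 : ∑ q ∈ x, π q.1 ≤ ∑ i ∈ S, π i := by
    rw [← sum_image (f := π) (fun q hq q' hq' => hm.1 q hq q' hq')]
    exact sum_le_sum_of_subset_of_nonneg
      (fun i hi => by obtain ⟨q, hq, rfl⟩ := mem_image.1 hi; exact (hx q hq).1)
      (fun i _ _ => h.1 i)
  have h3 : ∑ q ∈ x, p q.2 ≤ ∑ j ∈ J, p j := by
    rw [← sum_image (f := p) (fun q hq q' hq' => hm.2 q hq q' hq')]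
    exact sum_le_sum_of_subset_of_nonneg
      (fun j hj => by obtain ⟨q, hq, rfl⟩ := mem_image.1 hj; exact (hx q hq).2)
      (fun j _ _ => h.2.1 j)
  calc ∑ q ∈ x, b q.1 q.2 ≤ ∑ q ∈ x, (π q.1 + p q.2) := h1
    _ = ∑ q ∈ x, π q.1 + ∑ q ∈ x, p q.2 := sum_add_distrib
    _ ≤ Ob S J π p := add_le_add h2 h3

/-- The join and meet of two optimal dual solutions are optimal. -/
lemma join_opt {b : N → M → ℝ} {S : Finset N} {J : Finset M} {π1 π2 : N → ℝ} {p1 p2 : M → ℝ}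
    (h1 : DOpt b S J π1 p1) (h2 : DOpt b S J π2 p2) :
    DOpt b S J (fun i => max (π1 i) (π2 i)) (fun j => min (p1 j) (p2 j)) ∧
    DOpt b S J (fun i => min (π1 i) (π2 i)) (fun j => max (p1 j) (p2 j)) := by
  have hfU : DF b S J (fun i => max (π1 i) (π2 i)) (fun j => min (p1 j) (p2 j)) := by
    refine ⟨fun i => le_trans (h1.1.1 i) (le_max_left _ _),
      fun j => le_min (h1.1.2.1 j) (h2.1.2.1 j), fun i hi j hj => ?_⟩
    show b i j ≤ max (π1 i) (π2 i) + min (p1 j) (p2 j)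
    rcases le_total (p1 j) (p2 j) with hc | hc
    · rw [min_eq_left hc]
      exact le_trans (h1.1.2.2 i hi j hj) (add_le_add_left (le_max_left _ _) _)
    · rw [min_eq_right hc]
      exact le_trans (h2.1.2.2 i hi j hj) (add_le_add_left (le_max_right _ _) _)
  have hfL : DF b S J (fun i => min (π1 i) (π2 i)) (fun j => max (p1 j) (p2 j)) := by
    refine ⟨fun i => le_min (h1.1.1 i) (h2.1.1 i),
      fun j => le_trans (h1.1.2.1 j) (le_max_left _ _), fun i hi j hj => ?_⟩
    show b i j ≤ min (π1 i) (π2 i) + max (p1 j) (p2 j)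
    rcases le_total (π1 i) (π2 i) with hc | hc
    · rw [min_eq_left hc]
      exact le_trans (h1.1.2.2 i hi j hj) (add_le_add_right (le_max_left _ _) _)
    · rw [min_eq_right hc]
      exact le_trans (h2.1.2.2 i hi j hj) (add_le_add_right (le_max_right _ _) _)
  have hsum : Ob S J (fun i => max (π1 i) (π2 i)) (fun j => min (p1 j) (p2 j)) +
      Ob S J (fun i => min (π1 i) (π2 i)) (fun j => max (p1 j) (p2 j)) =
      Ob S J π1 p1 + Ob S J π2 p2 := by
    simp only [Ob]
    have e1 : ∑ i ∈ S, max (π1 i) (π2 i) + ∑ i ∈ S, min (π1 i) (π2 i)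
        = ∑ i ∈ S, π1 i + ∑ i ∈ S, π2 i := by
      rw [← sum_add_distrib, ← sum_add_distrib]
      exact sum_congr rfl fun i _ => max_add_min _ _
    have e2 : ∑ j ∈ J, min (p1 j) (p2 j) + ∑ j ∈ J, max (p1 j) (p2 j)
        = ∑ j ∈ J, p1 j + ∑ j ∈ J, p2 j := by
      rw [← sum_add_distrib, ← sum_add_distrib]
      exact sum_congr rfl fun j _ => min_add_max _ _
    linarith
  have wU := weak_duality hfU
  have wL := weak_duality hfL
  have := h1.2
  have := h2.2
  exact ⟨⟨hfU, by simp only [Ob] at *; linarith⟩, ⟨hfL, by simp only [Ob] at *; linarith⟩⟩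

lemma family_join_pi {b : N → M → ℝ} {S : Finset N} {J : Finset M} {ι : Type*}
    (f : ι → N → ℝ) (g : ι → M → ℝ) (hex : ∃ π p, DOpt b S J π p) :
    ∀ I : Finset ι, (∀ a ∈ I, DOpt b S J (f a) (g a)) →
      ∃ π p, DOpt b S J π p ∧ ∀ a ∈ I, ∀ i, f a i ≤ π i := by
  classical
  intro I
  induction I using Finset.induction_on with
  | empty =>
    intro _
    obtain ⟨π, p, h⟩ := hex
    exact ⟨π, p, h, by simp⟩
  | @insert a I haI ihI =>
    intro h
    obtain ⟨π, p, hop, hle⟩ := ihI fun a' ha' => h a' (mem_insert_of_mem ha')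
    refine ⟨fun i => max (f a i) (π i), fun j => min (g a j) (p j),
      (join_opt (h a (mem_insert_self a I)) hop).1, ?_⟩
    intro a' ha' i
    rcases mem_insert.1 ha' with rfl | ha'
    · exact le_max_left _ _
    · exact le_trans (hle a' ha' i) (le_max_right _ _)

lemma family_join_p {b : N → M → ℝ} {S : Finset N} {J : Finset M} {ι : Type*}
    (f : ι → N → ℝ) (g : ι → M → ℝ) (hex : ∃ π p, DOpt b S J π p) :
    ∀ I : Finset ι, (∀ a ∈ I, DOpt b S J (f a) (g a)) →
      ∃ π p, DOpt b S J π p ∧ ∀ a ∈ I, ∀ j, g a j ≤ p j := by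
  classical
  intro I
  induction I using Finset.induction_on with
  | empty =>
    intro _
    obtain ⟨π, p, h⟩ := hex
    exact ⟨π, p, h, by simp⟩
  | @insert a I haI ihI =>
    intro h
    obtain ⟨π, p, hop, hle⟩ := ihI fun a' ha' => h a' (mem_insert_of_mem ha')
    refine ⟨fun i => min (f a i) (π i), fun j => max (g a j) (p j),
      (join_opt (h a (mem_insert_self a I)) hop).2, ?_⟩
    intro a' ha' j
    rcases mem_insert.1 ha' with rfl | ha'
    · exact le_max_left _ _
    · exact le_trans (hle a' ha' j) (le_max_right _ _)

lemma Val_empty_right (b : N → M → ℝ) (S : Finset N) : Val b S (∅ : Finset M) = 0 := by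
  refine le_antisymm ?_ (Val_nonneg b S ∅)
  obtain ⟨x, hm, hx, hv⟩ := Val_attained b S ∅
  have : x = ∅ := eq_empty_of_forall_notMem fun p hp => (notMem_empty p.2 (hx p hp).2)
  rw [hv, this]; simp

lemma Val_empty_left (b : N → M → ℝ) (J : Finset M) : Val b (∅ : Finset N) J = 0 := by
  refine le_antisymm ?_ (Val_nonneg b ∅ J)
  obtain ⟨x, hm, hx, hv⟩ := Val_attained b ∅ J
  have : x = ∅ := eq_empty_of_forall_notMem fun p hp => (notMem_empty p.1 (hx p hp).1)
  rw [hv, this]; simp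

lemma Val_mono_right {b : N → M → ℝ} {S : Finset N} {J J' : Finset M} (h : J ⊆ J') :
    Val b S J ≤ Val b S J' := by
  obtain ⟨x, hm, hx, hv⟩ := Val_attained b S J
  rw [hv]
  exact le_Val hm fun p hp => ⟨(hx p hp).1, h (hx p hp).2⟩

lemma zero_opt_right (b : N → M → ℝ) (S : Finset N) :
    DOpt b S (∅ : Finset M) (fun _ => 0) (fun _ => 0) := by
  refine ⟨⟨fun _ => le_refl _, fun _ => le_refl _, fun i _ j hj => absurd hj (notMem_empty j)⟩, ?_⟩
  simp [Ob, Val_empty_right]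

lemma zero_opt_left (b : N → M → ℝ) (J : Finset M) :
    DOpt b (∅ : Finset N) J (fun _ => 0) (fun _ => 0) := by
  refine ⟨⟨fun _ => le_refl _, fun _ => le_refl _, fun i hi => absurd hi (notMem_empty i)⟩, ?_⟩
  simp [Ob, Val_empty_left]

/-- Strong duality with VCG bounds, by induction on the size of the problem. -/
lemma SD (b : N → M → ℝ) :
    ∀ (n : ℕ) (S : Finset N) (J : Finset M), S.card + J.card = n →
    (∃ π p, DOpt b S J π p ∧ ∀ i ∈ S, Val b S J - Val b (S.erase i) J ≤ π i) ∧
    (∃ π p, DOpt b S J π p ∧ ∀ j ∈ J, Val b S J - Val b S (J.erase j) ≤ p j) := by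
  intro n
  induction n using Nat.strong_induction_on with
  | _ n ihn =>
  intro S J hcard
  constructor
  · -- agent side
    rcases S.eq_empty_or_nonempty with rfl | hS
    · exact ⟨fun _ => 0, fun _ => 0, zero_opt_left b J, fun i hi => absurd hi (notMem_empty i)⟩
    have peri : ∀ i ∈ S, ∃ π p, DOpt b S J π p ∧
        Val b S J - Val b (S.erase i) J ≤ π i := by
      intro i hi
      have hlt : (S.erase i).card + J.card < n := by
        rw [← hcard]
        have := card_erase_of_mem hi
        have hpos : 0 < S.card := card_pos.2 ⟨i, hi⟩
        omega
      obtain ⟨π', p', hop', hp'⟩ := (ihn _ hlt (S.erase i) J rfl).2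
      set c := Val b S J - Val b (S.erase i) J with hc
      have hc0 : 0 ≤ c := by
        have := Val_mono (b := b) (J := J) (erase_subset i S)
        linarith
      refine ⟨Function.update π' i c, p', ⟨⟨?_, hop'.1.2.1, ?_⟩, ?_⟩, ?_⟩
      · intro k
        rcases eq_or_ne k i with rfl | hk
        · rw [Function.update_self]; exact hc0
        · rw [Function.update_of_ne hk]; exact hop'.1.1 k
      · intro i' hi' j hj
        rcases eq_or_ne i' i with rfl | hne
        · rw [Function.update_self]
          have h1 := hp' j hj
          have h2 := Val_pair (b := b) hi' hj
          linarith
        · rw [Function.update_of_ne hne]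
          exact hop'.1.2.2 i' (mem_erase.2 ⟨hne, hi'⟩) j hj
      · have := hop'.2
        simp only [Ob] at this ⊢
        rw [sum_update_of_mem hi, sdiff_singleton_eq_erase]
        linarith
      · rw [Function.update_self]
    obtain ⟨i0, hi0⟩ := hS
    have hex : ∃ π p, DOpt b S J π p := by
      obtain ⟨π, p, h, _⟩ := peri i0 hi0
      exact ⟨π, p, h⟩
    have hall : ∀ i : N, ∃ π p, DOpt b S J π p ∧
        (i ∈ S → Val b S J - Val b (S.erase i) J ≤ π i) := by
      intro i
      by_cases hi : i ∈ S
      · obtain ⟨π, p, h1, h2⟩ := peri i hi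
        exact ⟨π, p, h1, fun _ => h2⟩
      · obtain ⟨π, p, h⟩ := hex
        exact ⟨π, p, h, fun h' => absurd h' hi⟩
    choose f g hfg using hall
    obtain ⟨π0, p0, hopt, hle⟩ :=
      family_join_pi f g hex S (fun a ha => (hfg a).1)
    exact ⟨π0, p0, hopt, fun i hi => le_trans ((hfg i).2 hi) (hle i hi i)⟩
  · -- item side
    rcases J.eq_empty_or_nonempty with rfl | hJ
    · exact ⟨fun _ => 0, fun _ => 0, zero_opt_right b S, fun j hj => absurd hj (notMem_empty j)⟩
    have perj : ∀ j ∈ J, ∃ π p, DOpt b S J π p ∧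
        Val b S J - Val b S (J.erase j) ≤ p j := by
      intro j hj
      have hlt : S.card + (J.erase j).card < n := by
        rw [← hcard]
        have := card_erase_of_mem hj
        have hpos : 0 < J.card := card_pos.2 ⟨j, hj⟩
        omega
      obtain ⟨π', p', hop', hπ'⟩ := (ihn _ hlt S (J.erase j) rfl).1
      set c := Val b S J - Val b S (J.erase j) with hc
      have hc0 : 0 ≤ c := by
        have := Val_mono_right (b := b) (S := S) (erase_subset j J)
        linarith
      refine ⟨π', Function.update p' j c, ⟨⟨hop'.1.1, ?_, ?_⟩, ?_⟩, ?_⟩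
      · intro k
        rcases eq_or_ne k j with rfl | hk
        · rw [Function.update_self]; exact hc0
        · rw [Function.update_of_ne hk]; exact hop'.1.2.1 k
      · intro i hi j' hj'
        rcases eq_or_ne j' j with rfl | hne
        · rw [Function.update_self]
          have h1 := hπ' i hi
          have h2 := Val_pair (b := b) hi hj'
          linarith
        · rw [Function.update_of_ne hne]
          exact hop'.1.2.2 i hi j' (mem_erase.2 ⟨hne, hj'⟩)
      · have := hop'.2
        simp only [Ob] at this ⊢
        rw [sum_update_of_mem hj, sdiff_singleton_eq_erase]
        linarith
      · rw [Function.update_self]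
    obtain ⟨j0, hj0⟩ := hJ
    have hex : ∃ π p, DOpt b S J π p := by
      obtain ⟨π, p, h, _⟩ := perj j0 hj0
      exact ⟨π, p, h⟩
    have hall : ∀ j : M, ∃ π p, DOpt b S J π p ∧
        (j ∈ J → Val b S J - Val b S (J.erase j) ≤ p j) := by
      intro j
      by_cases hj : j ∈ J
      · obtain ⟨π, p, h1, h2⟩ := perj j hj
        exact ⟨π, p, h1, fun _ => h2⟩
      · obtain ⟨π, p, h⟩ := hex
        exact ⟨π, p, h, fun h' => absurd h' hj⟩
    choose f g hfg using hall
    obtain ⟨π0, p0, hopt, hle⟩ :=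
      family_join_p f g hex J (fun a ha => (hfg a).1)
    exact ⟨π0, p0, hopt, fun j hj => le_trans ((hfg j).2 hj) (hle j hj j)⟩


/-- Existence of the lattice-smallest optimal dual solution, by compactness. -/
lemma exists_min_opt (b : N → M → ℝ) :
    ∃ π' p', DOpt b univ univ π' p' ∧
      ∀ π p, DOpt b univ univ π p → (∀ i, π i ≤ π' i) ∧ (∀ j, p' j ≤ p j) := by
  classical
  set V := Val b univ univ with hV
  set O : Set ((N → ℝ) × (M → ℝ)) := {q | DOpt b univ univ q.1 q.2} with hO
  have hmemO : ∀ q : (N → ℝ) × (M → ℝ), q ∈ O ↔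
      (∀ i, 0 ≤ q.1 i) ∧ (∀ j, 0 ≤ q.2 j) ∧ (∀ i j, b i j ≤ q.1 i + q.2 j) ∧
      (∑ i, q.1 i) + (∑ j, q.2 j) = V := by
    intro q
    simp only [hO, Set.mem_setOf_eq, DOpt, DF, Ob]
    constructor
    · rintro ⟨⟨h1, h2, h3⟩, h4⟩
      exact ⟨h1, h2, fun i j => h3 i (mem_univ i) j (mem_univ j), h4⟩
    · rintro ⟨h1, h2, h3, h4⟩
      exact ⟨⟨h1, h2, fun i _ j _ => h3 i j⟩, h4⟩
  have hOclosed : IsClosed O := by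
    have : O = (⋂ i, {q : (N → ℝ) × (M → ℝ) | 0 ≤ q.1 i}) ∩
        ((⋂ j, {q : (N → ℝ) × (M → ℝ) | 0 ≤ q.2 j}) ∩
        ((⋂ i, ⋂ j, {q : (N → ℝ) × (M → ℝ) | b i j ≤ q.1 i + q.2 j}) ∩
        {q : (N → ℝ) × (M → ℝ) | (∑ i, q.1 i) + (∑ j, q.2 j) = V})) := by
      ext q
      simp only [Set.mem_inter_iff, Set.mem_iInter, Set.mem_setOf_eq, hmemO q]
      try tauto
    rw [this]
    have c1 : ∀ i : N, Continuous fun q : (N → ℝ) × (M → ℝ) => q.1 i :=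
      fun i => (continuous_apply i).comp continuous_fst
    have c2 : ∀ j : M, Continuous fun q : (N → ℝ) × (M → ℝ) => q.2 j :=
      fun j => (continuous_apply j).comp continuous_snd
    refine IsClosed.inter (isClosed_iInter fun i => isClosed_le continuous_const (c1 i))
      (IsClosed.inter (isClosed_iInter fun j => isClosed_le continuous_const (c2 j))
      (IsClosed.inter (isClosed_iInter fun i => isClosed_iInter fun j =>
        isClosed_le continuous_const ((c1 i).add (c2 j))) (isClosed_eq ?_ continuous_const)))
    exact ((continuous_finset_sum univ fun i _ => c1 i).add
      (continuous_finset_sum univ fun j _ => c2 j))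
  have hK : IsCompact ((Set.univ.pi fun _ : N => Set.Icc (0:ℝ) V) ×ˢ
      (Set.univ.pi fun _ : M => Set.Icc (0:ℝ) V)) :=
    (isCompact_univ_pi fun _ => isCompact_Icc).prod (isCompact_univ_pi fun _ => isCompact_Icc)
  have hsub : O ⊆ (Set.univ.pi fun _ : N => Set.Icc (0:ℝ) V) ×ˢ
      (Set.univ.pi fun _ : M => Set.Icc (0:ℝ) V) := by
    intro q hq
    obtain ⟨h1, h2, h3, h4⟩ := (hmemO q).1 hq
    have hs1 : (0:ℝ) ≤ ∑ i, q.1 i := sum_nonneg fun i _ => h1 i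
    have hs2 : (0:ℝ) ≤ ∑ j, q.2 j := sum_nonneg fun j _ => h2 j
    constructor
    · intro i _
      refine ⟨h1 i, ?_⟩
      have := single_le_sum (f := q.1) (fun k _ => h1 k) (mem_univ i)
      linarith
    · intro j _
      refine ⟨h2 j, ?_⟩
      have := single_le_sum (f := q.2) (fun k _ => h2 k) (mem_univ j)
      linarith
  have hOcpt : IsCompact O := hK.of_isClosed_subset hOclosed hsub
  obtain ⟨π1, p1, hopt1, _⟩ := (SD b (univ.card + univ.card) univ univ rfl).1
  have hOne : O.Nonempty := ⟨(π1, p1), hopt1⟩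
  have hcont : ContinuousOn (fun q : (N → ℝ) × (M → ℝ) => ∑ j, q.2 j) O :=
    ((continuous_finset_sum univ fun j _ =>
      (continuous_apply j).comp continuous_snd)).continuousOn
  obtain ⟨q, hqO, hqmin⟩ := hOcpt.exists_isMinOn hOne hcont
  refine ⟨q.1, q.2, hqO, ?_⟩
  intro π p hop
  have hjoin := (join_opt hop hqO).1
  have hjO : ((fun i => max (π i) (q.1 i)), (fun j => min (p j) (q.2 j))) ∈ O := hjoin
  have hmin := hqmin hjO
  simp only [Set.mem_setOf_eq] at hmin
  have hle1 : ∀ j ∈ (univ : Finset M), min (p j) (q.2 j) ≤ q.2 j :=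
    fun j _ => min_le_right _ _
  have hsle : ∑ j, min (p j) (q.2 j) ≤ ∑ j, q.2 j := sum_le_sum hle1
  have hseq : ∑ j, min (p j) (q.2 j) = ∑ j, q.2 j := le_antisymm hsle hmin
  have hpe : ∀ j ∈ (univ : Finset M), min (p j) (q.2 j) = q.2 j :=
    (sum_eq_sum_iff_of_le hle1).1 hseq
  have hp : ∀ j, q.2 j ≤ p j := by
    intro j
    have h := hpe j (mem_univ j)
    rw [← h]
    exact min_le_left _ _
  have e1 : (∑ i, max (π i) (q.1 i)) + (∑ j, min (p j) (q.2 j)) = V := ((hmemO _).1 hjO).2.2.2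
  have e2 : (∑ i, q.1 i) + (∑ j, q.2 j) = V := ((hmemO q).1 hqO).2.2.2
  have hsum_eq : ∑ i, max (π i) (q.1 i) = ∑ i, q.1 i := by
    rw [hseq] at e1
    linarith
  have hle2 : ∀ i ∈ (univ : Finset N), q.1 i ≤ max (π i) (q.1 i) := fun i _ => le_max_right _ _
  have hπe : ∀ i ∈ (univ : Finset N), q.1 i = max (π i) (q.1 i) :=
    (sum_eq_sum_iff_of_le hle2).1 hsum_eq.symm
  refine ⟨fun i => ?_, hp⟩
  rw [hπe i (mem_univ i)]
  exact le_max_left _ _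


end S17


namespace S17

lemma AVal_Val [Fintype N] [Fintype M] [DecidableEq N] [DecidableEq M] (b : N → M → ℝ) (S : Finset N) :
    AVal b S ∅ (Val b S univ) := by
  constructor
  · obtain ⟨x, hm, hx, hv⟩ := Val_attained b S univ
    exact ⟨x, hm, fun p hp => by simpa using (hx p hp).1,
      fun i hi => absurd hi (notMem_empty i), hv⟩
  · rintro r ⟨x, hm, hx, -, rfl⟩
    exact le_Val hm fun p hp => ⟨by simpa using hx p hp, mem_univ _⟩

end S17

/-- there is an optimal dual solution that is the smallest element of the
lattice of optimal dual solutions (largest discounts, smallest raises and prices), and at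
this solution each `π i` equals agent `i`'s VCG discount `V_w(N) - V_w(N \ {i})`. -/
theorem stmt17 [Fintype N] [DecidableEq N] [Fintype M] [Nonempty M]
    (hmn : Fintype.card M ≤ Fintype.card N)
    (b : N → M → ℝ) (hb : ∀ i j, 0 ≤ b i j) :
    ∃ (π' μ' : N → ℝ) (p' : M → ℝ),
      DualOptimal b π' μ' p' ∧
      (∀ π μ p, DualOptimal b π μ p →
        (∀ i, π i ≤ π' i) ∧ (∀ i, μ' i ≤ μ i) ∧ (∀ j, p' j ≤ p j)) ∧
      ∀ (i : N) (rN ri : ℝ), AVal b univ ∅ rN → AVal b (univ \ {i}) ∅ ri →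
        π' i = rN - ri := by
  classical
  obtain ⟨π', p', hopt, hdom⟩ := S17.exists_min_opt b
  have hfeas' : DualFeasible b π' (fun _ => 0) p' := by
    refine ⟨hopt.1.1, fun _ => le_refl 0, hopt.1.2.1, fun i j => ?_⟩
    show b i j - p' j ≤ π' i - 0
    have := hopt.1.2.2 i (mem_univ i) j (mem_univ j)
    linarith
  refine ⟨π', fun _ => 0, p', ⟨hfeas', ?_⟩, ?_, ?_⟩
  · intro π'' μ'' p'' hf
    have hdf : S17.DF b univ univ π'' p'' := by
      refine ⟨hf.1, hf.2.2.1, fun i _ j _ => ?_⟩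
      have h1 := hf.2.2.2 i j
      have h2 := hf.2.1 i
      linarith
    have hw := S17.weak_duality hdf
    have h2 := hopt.2
    simp only [DualObj, S17.Ob] at *
    linarith
  · intro π μ p hdo
    have hdf : S17.DF b univ univ π p := by
      refine ⟨hdo.1.1, hdo.1.2.2.1, fun i _ j _ => ?_⟩
      have h1 := hdo.1.2.2.2 i j
      have h2 := hdo.1.2.1 i
      linarith
    have hub : S17.Ob univ univ π p ≤ S17.Val b univ univ := by
      have h1 := hdo.2 π' (fun _ => 0) p' hfeas'
      have h2 := hopt.2
      simp only [DualObj, S17.Ob] at *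
      linarith
    have hob : S17.DOpt b univ univ π p := ⟨hdf, le_antisymm hub (S17.weak_duality hdf)⟩
    obtain ⟨hπ, hp⟩ := hdom π p hob
    exact ⟨hπ, fun i => hdo.1.2.1 i, hp⟩
  · intro i rN ri hN hri
    have h1 : rN = S17.Val b univ univ := hN.unique (S17.AVal_Val b univ)
    rw [show (univ \ {i} : Finset N) = univ.erase i from sdiff_singleton_eq_erase i univ] at hri
    have h2 : ri = S17.Val b (univ.erase i) univ := hri.unique (S17.AVal_Val b (univ.erase i))
    obtain ⟨π0, p0, hopt0, hbd0⟩ :=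
      (S17.SD b ((univ : Finset N).card + (univ : Finset M).card) univ univ rfl).1
    have hge : S17.Val b univ univ - S17.Val b (univ.erase i) univ ≤ π' i :=
      le_trans (hbd0 i (mem_univ i)) ((hdom π0 p0 hopt0).1 i)
    have hdfe : S17.DF b (univ.erase i) univ π' p' :=
      ⟨hopt.1.1, hopt.1.2.1, fun i' _ j hj => hopt.1.2.2 i' (mem_univ i') j hj⟩
    have hw := S17.weak_duality hdfe
    have hsum : π' i + ∑ k ∈ univ.erase i, π' k = ∑ k, π' k :=
      add_sum_erase _ _ (mem_univ i)
    have h3 := hopt.2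
    simp only [S17.Ob] at hw h3
    rw [h1, h2]
    linarith
end

section
/- In the assignment model: there exists an optimal solution (π°, μ°, p°) to the dual linear program D(N,∅) that is the largest element of the lattice of optimal dual solutions, i.e., every optimal dual solution (π, μ, p) satisfies π° ≤ π, μ ≤ μ°, and p ≤ p° componentwise; moreover, at this solution μ°_i equals agent i's VCG raise V_ℓ(N) − V_ℓ(N∖{i}) for every i ∈ N. -/
open Finset

variable {N M : Type*}

set_option linter.unusedSectionVars false
set_option linter.unusedVariables false

namespace S18

variable {A : Type*} {B : Type*}

lemma matching_eq_snd {x : Finset (A × B)} (h : IsMatching x) {a : A} {b b' : B}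
    (h1 : (a, b) ∈ x) (h2 : (a, b') ∈ x) : b = b' := by
  have := h.1 _ h1 _ h2 rfl
  exact congrArg Prod.snd this

lemma matching_eq_fst {x : Finset (A × B)} (h : IsMatching x) {a a' : A} {b : B}
    (h1 : (a, b) ∈ x) (h2 : (a', b) ∈ x) : a = a' := by
  have := h.2 _ h1 _ h2 rfl
  exact congrArg Prod.fst this

section Gen

variable [Fintype A] [Fintype B] [DecidableEq A] [DecidableEq B]

def Feas (c : A → B → ℝ) (f : A → ℝ) (g : B → ℝ) : Prop :=
  (∀ a, 0 ≤ f a) ∧ (∀ b, 0 ≤ g b) ∧ ∀ a b, c a b ≤ f a + g b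

noncomputable def obj (f : A → ℝ) (g : B → ℝ) : ℝ := ∑ a, f a + ∑ b, g b

lemma feas_symm {c : A → B → ℝ} {f g} (h : Feas c f g) :
    Feas (fun b a => c a b) g f :=
  ⟨h.2.1, h.1, fun b a => by have := h.2.2 a b; linarith⟩

lemma obj_symm (f : A → ℝ) (g : B → ℝ) : obj g f = obj f g := add_comm _ _

/-- sum of f over fst of a matching is at most total sum. -/
lemma sum_fst_le {x : Finset (A × B)} (hm : IsMatching x) {f : A → ℝ}
    (hf : ∀ a, 0 ≤ f a) : ∑ q ∈ x, f q.1 ≤ ∑ a, f a := by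
  classical
  have key : ∑ a ∈ x.image Prod.fst, f a = ∑ q ∈ x, f q.1 :=
    Finset.sum_image (fun q hq q' hq' he => hm.1 _ hq _ hq' he)
  rw [← key]
  exact Finset.sum_le_sum_of_subset_of_nonneg (Finset.subset_univ _)
    (fun a _ _ => hf a)

lemma sum_snd_le {x : Finset (A × B)} (hm : IsMatching x) {g : B → ℝ}
    (hg : ∀ b, 0 ≤ g b) : ∑ q ∈ x, g q.2 ≤ ∑ b, g b := by
  classical
  have key : ∑ l ∈ x.image Prod.snd, g l = ∑ q ∈ x, g q.2 :=
    Finset.sum_image (fun q hq q' hq' he => hm.2 _ hq _ hq' he)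
  rw [← key]
  exact Finset.sum_le_sum_of_subset_of_nonneg (Finset.subset_univ _)
    (fun a _ _ => hg a)

lemma sum_fst_eq {x : Finset (A × B)} (hm : IsMatching x) {f : A → ℝ}
    (hf : ∀ a, 0 ≤ f a) (hcov : ∀ a, 0 < f a → ∃ l, (a, l) ∈ x) :
    ∑ q ∈ x, f q.1 = ∑ a, f a := by
  classical
  have key : ∑ a ∈ x.image Prod.fst, f a = ∑ q ∈ x, f q.1 :=
    Finset.sum_image (fun q hq q' hq' he => hm.1 _ hq _ hq' he)
  rw [← key]
  apply Finset.sum_subset (Finset.subset_univ _)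
  intro a _ ha
  by_contra h0
  have : 0 < f a := lt_of_le_of_ne (hf a) (Ne.symm h0)
  obtain ⟨l, hl⟩ := hcov a this
  exact ha (Finset.mem_image.2 ⟨(a, l), hl, rfl⟩)

lemma sum_snd_eq {x : Finset (A × B)} (hm : IsMatching x) {g : B → ℝ}
    (hg : ∀ b, 0 ≤ g b) (hcov : ∀ l, 0 < g l → ∃ a, (a, l) ∈ x) :
    ∑ q ∈ x, g q.2 = ∑ b, g b := by
  classical
  have key : ∑ l ∈ x.image Prod.snd, g l = ∑ q ∈ x, g q.2 :=
    Finset.sum_image (fun q hq q' hq' he => hm.2 _ hq _ hq' he)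
  rw [← key]
  apply Finset.sum_subset (Finset.subset_univ _)
  intro l _ hl
  by_contra h0
  have : 0 < g l := lt_of_le_of_ne (hg l) (Ne.symm h0)
  obtain ⟨a, ha⟩ := hcov l this
  exact hl (Finset.mem_image.2 ⟨(a, l), ha, rfl⟩)

/-- Weak duality. -/
lemma weakdual {c : A → B → ℝ} {f g} (hfe : Feas c f g) {x : Finset (A × B)}
    (hm : IsMatching x) : ∑ q ∈ x, c q.1 q.2 ≤ obj f g := by
  have h1 : ∑ q ∈ x, c q.1 q.2 ≤ ∑ q ∈ x, (f q.1 + g q.2) :=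
    Finset.sum_le_sum (fun q _ => hfe.2.2 q.1 q.2)
  rw [Finset.sum_add_distrib] at h1
  have := sum_fst_le hm hfe.1
  have := sum_snd_le hm hfe.2.1
  unfold obj; linarith

/-- Value of a tight matching covering all positive-valued agents and items. -/
lemma tightsum {c : A → B → ℝ} {f g} (hfe : Feas c f g) {x : Finset (A × B)}
    (hm : IsMatching x) (ht : ∀ q ∈ x, f q.1 + g q.2 = c q.1 q.2)
    (hcA : ∀ a, 0 < f a → ∃ l, (a, l) ∈ x)
    (hcB : ∀ l, 0 < g l → ∃ a, (a, l) ∈ x) :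
    ∑ q ∈ x, c q.1 q.2 = obj f g := by
  have h1 : ∑ q ∈ x, c q.1 q.2 = ∑ q ∈ x, (f q.1 + g q.2) :=
    Finset.sum_congr rfl (fun q hq => (ht q hq).symm)
  rw [h1, Finset.sum_add_distrib, sum_fst_eq hm hfe.1 hcA, sum_snd_eq hm hfe.2.1 hcB]
  rfl

/-- The adjustment move: given a "closed deficient" structure, construct a new feasible
point with explicitly computable objective change. -/
lemma adj {c : A → B → ℝ} {f g} (hfe : Feas c f g)
    (K : Finset A) (R : Finset B) (hKne : K.Nonempty)
    (hKpos : ∀ k ∈ K, 0 < f k)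
    (hcl : ∀ k ∈ K, ∀ l, f k + g l = c k l → l ∈ R) :
    ∃ ε > 0, ∃ f' g', Feas c f' g' ∧
      obj f' g' = obj f g - ε * K.card + ε * R.card ∧
      (∑ b, g' b) = ∑ b, g b + ε * R.card := by
  classical
  set E : Finset ℝ := K.image f ∪
    ((K ×ˢ (univ \ R)).image fun q => f q.1 + g q.2 - c q.1 q.2) with hE
  have hEne : E.Nonempty := by
    obtain ⟨k, hk⟩ := hKne
    exact ⟨f k, Finset.mem_union_left _ (Finset.mem_image_of_mem f hk)⟩
  set ε := E.min' hEne with hεdef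
  have hεpos : 0 < ε := by
    apply (Finset.lt_min'_iff E hEne).2
    intro y hy
    rcases Finset.mem_union.1 hy with h | h
    · obtain ⟨k, hk, rfl⟩ := Finset.mem_image.1 h
      exact hKpos k hk
    · obtain ⟨q, hq, rfl⟩ := Finset.mem_image.1 h
      rw [Finset.mem_product] at hq
      have hq1 := hq.1
      have hq2 := (Finset.mem_sdiff.1 hq.2).2
      have hge : 0 ≤ f q.1 + g q.2 - c q.1 q.2 := by
        have := hfe.2.2 q.1 q.2; linarith
      rcases lt_or_eq_of_le hge with h' | h'
      · exact h'
      · exfalso; exact hq2 (hcl q.1 hq1 q.2 (by linarith))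
  have hεf : ∀ a ∈ K, ε ≤ f a := fun a ha =>
    Finset.min'_le _ _ (Finset.mem_union_left _ (Finset.mem_image_of_mem f ha))
  have hεsl : ∀ a ∈ K, ∀ b, b ∉ R → ε ≤ f a + g b - c a b := by
    intro a ha b hb
    apply Finset.min'_le
    apply Finset.mem_union_right
    have hmem : (a, b) ∈ K ×ˢ (univ \ R) :=
      Finset.mem_product.2 ⟨ha, Finset.mem_sdiff.2 ⟨Finset.mem_univ _, hb⟩⟩
    exact Finset.mem_image_of_mem _ hmem
  refine ⟨ε, hεpos, fun a => if a ∈ K then f a - ε else f a,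
    fun b => if b ∈ R then g b + ε else g b, ⟨?_, ?_, ?_⟩, ?_, ?_⟩
  · intro a
    by_cases ha : a ∈ K
    · simp only [ha, if_true]
      have := hεf a ha; linarith
    · simp only [ha, if_false]; exact hfe.1 a
  · intro b
    by_cases hb : b ∈ R
    · simp only [hb, if_true]; have := hfe.2.1 b; linarith
    · simp only [hb, if_false]; exact hfe.2.1 b
  · intro a b
    by_cases ha : a ∈ K <;> by_cases hb : b ∈ R <;>
      simp only [ha, hb, if_true, if_false]
    · have := hfe.2.2 a b; linarith
    · have := hεsl a ha b hb; linarith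
    · have := hfe.2.2 a b; linarith
    · exact hfe.2.2 a b
  · have h1 : ∑ a, (if a ∈ K then f a - ε else f a) = ∑ a, f a - ε * K.card := by
      have he : ∀ a : A, (if a ∈ K then f a - ε else f a)
          = f a - (if a ∈ K then ε else 0) := by
        intro a; split <;> ring
      simp_rw [he, Finset.sum_sub_distrib, Finset.sum_ite_mem,
        Finset.univ_inter, Finset.sum_const, nsmul_eq_mul]
      ring
    have h2 : ∑ b, (if b ∈ R then g b + ε else g b) = ∑ b, g b + ε * R.card := by
      have he : ∀ b : B, (if b ∈ R then g b + ε else g b)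
          = g b + (if b ∈ R then ε else 0) := by
        intro b; split <;> ring
      simp_rw [he, Finset.sum_add_distrib, Finset.sum_ite_mem,
        Finset.univ_inter, Finset.sum_const, nsmul_eq_mul]
      ring
    unfold obj; rw [h1, h2]; ring
  · have he : ∀ b : B, (if b ∈ R then g b + ε else g b)
        = g b + (if b ∈ R then ε else 0) := by
      intro b; split <;> ring
    simp_rw [he, Finset.sum_add_distrib, Finset.sum_ite_mem,
      Finset.univ_inter, Finset.sum_const, nsmul_eq_mul]
    ring

/-! ### Path machinery -/

lemma matching_subset {x x' : Finset (A × B)} (h : x' ⊆ x) (hm : IsMatching x) :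
    IsMatching x' :=
  ⟨fun p hp q hq he => hm.1 p (h hp) q (h hq) he,
   fun p hp q hq he => hm.2 p (h hp) q (h hq) he⟩

lemma matching_insert {x : Finset (A × B)} (hm : IsMatching x) {a : A} {bb : B}
    (ha : ∀ l, (a, l) ∉ x) (hb : ∀ k, (k, bb) ∉ x) :
    IsMatching (insert (a, bb) x) := by
  constructor
  · intro p hp q hq he
    rcases Finset.mem_insert.1 hp with hp | hp <;> rcases Finset.mem_insert.1 hq with hq | hq
    · rw [hp, hq]
    · exfalso; subst hp
      simp only at he
      exact ha q.2 (by rwa [show (a, q.2) = q from Prod.ext_iff.2 ⟨he, rfl⟩])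
    · exfalso; subst hq
      simp only at he
      exact ha p.2 (by rwa [show (a, p.2) = p from Prod.ext_iff.2 ⟨he.symm, rfl⟩])
    · exact hm.1 p hp q hq he
  · intro p hp q hq he
    rcases Finset.mem_insert.1 hp with hp | hp <;> rcases Finset.mem_insert.1 hq with hq | hq
    · rw [hp, hq]
    · exfalso; subst hp
      simp only at he
      exact hb q.1 (by rwa [show (q.1, bb) = q from Prod.ext_iff.2 ⟨rfl, he⟩])
    · exfalso; subst hq
      simp only at he
      exact hb p.1 (by rwa [show (p.1, bb) = p from Prod.ext_iff.2 ⟨rfl, he.symm⟩])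
    · exact hm.2 p hp q hq he

/-- One step of the alternating search: agent `k` can (tightly) demand an item
outside `J` currently matched (in `x`) to agent `k'` with positive `f`-value. -/
def Stepp (c : A → B → ℝ) (f : A → ℝ) (g : B → ℝ) (x : Finset (A × B)) (J : Finset B)
    (k k' : A) : Prop :=
  0 < f k' ∧ ∃ l, l ∉ J ∧ f k + g l = c k l ∧ (k', l) ∈ x

/-- Terminal condition: agent `k` tightly demands an item outside `J` that is either free
or matched to a zero-value agent. -/
def Goodd (c : A → B → ℝ) (f : A → ℝ) (g : B → ℝ) (x : Finset (A × B)) (J : Finset B)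
    (k : A) : Prop :=
  ∃ l, l ∉ J ∧ f k + g l = c k l ∧
    ((∀ k', (k', l) ∉ x) ∨ ∃ k', (k', l) ∈ x ∧ f k' = 0)

omit [Fintype A] [Fintype B] [DecidableEq A] [DecidableEq B] in
lemma chain_snoc {α : Type*} {r : α → α → Prop} :
    ∀ (L : List α) (a b : α), List.Chain r a L →
      r ((a :: L).getLast (List.cons_ne_nil _ _)) b → List.Chain r a (L ++ [b]) := by
  intro L
  induction L with
  | nil => intro a b _ h; exact List.chain_cons.2 ⟨h, List.Chain.nil⟩
  | cons c L' ih =>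
    intro a b hch h
    obtain ⟨hac, hch'⟩ := List.chain_cons.1 hch
    have hlast : ((c :: L').getLast (List.cons_ne_nil _ _)) =
        ((a :: c :: L').getLast (List.cons_ne_nil _ _)) :=
      (List.getLast_cons _).symm
    exact List.chain_cons.2 ⟨hac, ih c b hch' (by rw [hlast]; exact h)⟩

omit [Fintype A] [Fintype B] [DecidableEq A] [DecidableEq B] in
lemma chain_mono {α : Type*} {r s : α → α → Prop} :
    ∀ (L : List α) (a : α), List.Chain r a L →
      (∀ p q, q ∈ L → r p q → s p q) → List.Chain s a L := by
  intro L
  induction L with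
  | nil => intro a _ _; exact List.Chain.nil
  | cons c L' ih =>
    intro a hch h
    obtain ⟨hac, hch'⟩ := List.chain_cons.1 hch
    exact List.chain_cons.2 ⟨h a c List.mem_cons_self hac,
      ih c hch' (fun p q hq => h p q (List.mem_cons_of_mem _ hq))⟩

omit [Fintype A] [Fintype B] [DecidableEq A] [DecidableEq B] in
/-- Extend a nodup chain by one more step, staying nodup (cutting if needed). -/
lemma reach_ext {α : Type*} {r : α → α → Prop} {k₀ : α} (L : List α)
    (hch : List.Chain r k₀ L) (hnd : (k₀ :: L).Nodup) {k k' : α}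
    (hlast : (k₀ :: L).getLast (List.cons_ne_nil _ _) = k) (hr : r k k') :
    ∃ L', List.Chain r k₀ L' ∧ (k₀ :: L').Nodup ∧
      (k₀ :: L').getLast (List.cons_ne_nil _ _) = k' := by
  by_cases hk' : k' ∈ k₀ :: L
  · rcases List.mem_cons.1 hk' with h | h
    · exact ⟨[], List.Chain.nil, by simp, h.symm⟩
    · obtain ⟨s, t, hL⟩ := List.append_of_mem h
      subst hL
      refine ⟨s ++ [k'], (List.isChain_cons_split.1 hch).1, ?_, ?_⟩
      · apply List.Nodup.sublist _ hnd
        exact List.Sublist.cons₂ _ (List.Sublist.append_left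
          (List.Sublist.cons₂ _ (List.nil_sublist t)) s)
      · exact List.getLast_concat (l := k₀ :: s)
  · refine ⟨L ++ [k'], chain_snoc L k₀ k' hch (by rw [hlast]; exact hr), ?_, ?_⟩
    · have : k₀ :: (L ++ [k']) = (k₀ :: L) ++ [k'] := by simp
      rw [this, List.nodup_append]
      exact ⟨hnd, List.nodup_singleton _, by
        intro a ha b hb
        rw [List.mem_singleton] at hb
        subst hb
        rintro rfl
        exact hk' ha⟩
    · exact List.getLast_concat (l := k₀ :: L)

omit [Fintype A] [Fintype B] [DecidableEq A] [DecidableEq B] in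
lemma chain_pos {c : A → B → ℝ} {f : A → ℝ} {g : B → ℝ} {x : Finset (A × B)}
    {J : Finset B} :
    ∀ (L : List A) (a : A), List.Chain (Stepp c f g x J) a L → ∀ b ∈ L, 0 < f b := by
  intro L
  induction L with
  | nil => intro a _ b hb; exact absurd hb List.not_mem_nil
  | cons d L' ih =>
    intro a hch b hb
    obtain ⟨had, hch'⟩ := List.chain_cons.1 hch
    rcases List.mem_cons.1 hb with h | h
    · subst h; exact had.1
    · exact ih d hch' b h

/-- The surgery along an alternating path ending in a good terminal. -/
lemma surgery {c : A → B → ℝ} {f : A → ℝ} {g : B → ℝ} {J : Finset B} :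
    ∀ (L : List A) (x : Finset (A × B)) (k₀ : A),
    IsMatching x → (∀ q ∈ x, f q.1 + g q.2 = c q.1 q.2) → (∀ l, (k₀, l) ∉ x) →
    0 < f k₀ →
    List.Chain (Stepp c f g x J) k₀ L → (k₀ :: L).Nodup →
    Goodd c f g x J ((k₀ :: L).getLast (List.cons_ne_nil _ _)) →
    ∃ x' : Finset (A × B), IsMatching x' ∧ (∀ q ∈ x', f q.1 + g q.2 = c q.1 q.2) ∧
      (∀ k, (∃ l, (k, l) ∈ x) → 0 < f k → ∃ l, (k, l) ∈ x') ∧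
      (∃ l, (k₀, l) ∈ x') ∧
      (∀ k, (∃ l, (k, l) ∈ x') → (∃ l, (k, l) ∈ x) ∨ k = k₀) ∧
      (∀ l, (∃ k, (k, l) ∈ x) → ∃ k, (k, l) ∈ x') ∧
      (∀ l, (∃ k, (k, l) ∈ x') → (∃ k, (k, l) ∈ x) ∨ l ∉ J) := by
  intro L
  induction L with
  | nil =>
    intro x k₀ hm ht hk₀ _ _ _ hgood
    obtain ⟨l, hlJ, hlt, hterm⟩ := hgood
    rcases hterm with hfree | ⟨k', hk'x, hk'f⟩
    · refine ⟨insert (k₀, l) x, matching_insert hm hk₀ hfree, ?_, ?_, ?_, ?_, ?_, ?_⟩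
      · intro q hq
        rcases Finset.mem_insert.1 hq with hq | hq
        · subst hq; exact hlt
        · exact ht q hq
      · intro k hk _; obtain ⟨l'', h⟩ := hk
        exact ⟨l'', Finset.mem_insert_of_mem h⟩
      · exact ⟨l, Finset.mem_insert_self _ _⟩
      · intro k hk; obtain ⟨l'', h⟩ := hk
        rcases Finset.mem_insert.1 h with h | h
        · right; exact congrArg Prod.fst h
        · left; exact ⟨l'', h⟩
      · intro l'' hl''; obtain ⟨k, h⟩ := hl''
        exact ⟨k, Finset.mem_insert_of_mem h⟩
      · intro l'' hl''; obtain ⟨k, h⟩ := hl''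
        rcases Finset.mem_insert.1 h with h | h
        · right
          have : l'' = l := congrArg Prod.snd h
          subst this; exact hlJ
        · left; exact ⟨k, h⟩
    · -- evict the zero-value agent k'
      have hnol : ∀ k, (k, l) ∉ x.erase (k', l) := by
        intro k hk
        have hx := Finset.mem_of_mem_erase hk
        have : k = k' := matching_eq_fst hm hx hk'x
        subst this
        exact (Finset.ne_of_mem_erase hk) rfl
      have hk₀e : ∀ l'', (k₀, l'') ∉ x.erase (k', l) :=
        fun l'' h => hk₀ l'' (Finset.mem_of_mem_erase h)
      refine ⟨insert (k₀, l) (x.erase (k', l)),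
        matching_insert (matching_subset (Finset.erase_subset _ _) hm) hk₀e hnol,
        ?_, ?_, ?_, ?_, ?_, ?_⟩
      · intro q hq
        rcases Finset.mem_insert.1 hq with hq | hq
        · subst hq; exact hlt
        · exact ht q (Finset.mem_of_mem_erase hq)
      · intro k hk hfk; obtain ⟨l'', h⟩ := hk
        have hkne : k ≠ k' := by rintro rfl; rw [hk'f] at hfk; exact lt_irrefl 0 hfk
        refine ⟨l'', Finset.mem_insert_of_mem (Finset.mem_erase.2 ⟨?_, h⟩)⟩
        intro he
        exact hkne (congrArg Prod.fst he)
      · exact ⟨l, Finset.mem_insert_self _ _⟩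
      · intro k hk; obtain ⟨l'', h⟩ := hk
        rcases Finset.mem_insert.1 h with h | h
        · right; exact congrArg Prod.fst h
        · left; exact ⟨l'', Finset.mem_of_mem_erase h⟩
      · intro l'' hl''; obtain ⟨k, h⟩ := hl''
        by_cases hle : l'' = l
        · subst hle; exact ⟨k₀, Finset.mem_insert_self _ _⟩
        · refine ⟨k, Finset.mem_insert_of_mem (Finset.mem_erase.2 ⟨?_, h⟩)⟩
          intro he
          exact hle (congrArg Prod.snd he)
      · intro l'' hl''; obtain ⟨k, h⟩ := hl''
        rcases Finset.mem_insert.1 h with h | h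
        · have : l'' = l := congrArg Prod.snd h
          subst this; left; exact ⟨k', hk'x⟩
        · left; exact ⟨k, Finset.mem_of_mem_erase h⟩
  | cons k₁ L' ih =>
    intro x k₀ hm ht hk₀ hk₀f hch hnd hgood
    obtain ⟨hstep, hch'⟩ := List.chain_cons.1 hch
    obtain ⟨hfk₁, l₁, hl₁J, hl₁t, hk₁l₁⟩ := hstep
    have hk₀k₁ : k₀ ≠ k₁ := by
      intro h; rw [List.nodup_cons] at hnd
      exact hnd.1 (h ▸ List.mem_cons_self)
    have hk₁L' : k₁ ∉ L' := by
      rw [List.nodup_cons, List.nodup_cons] at hnd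
      exact hnd.2.1
    set x₁ : Finset (A × B) := insert (k₀, l₁) (x.erase (k₁, l₁)) with hx₁def
    have hnol₁ : ∀ k, (k, l₁) ∉ x.erase (k₁, l₁) := by
      intro k hk
      have hx := Finset.mem_of_mem_erase hk
      have : k = k₁ := matching_eq_fst hm hx hk₁l₁
      subst this
      exact (Finset.ne_of_mem_erase hk) rfl
    have hk₀e : ∀ l'', (k₀, l'') ∉ x.erase (k₁, l₁) :=
      fun l'' h => hk₀ l'' (Finset.mem_of_mem_erase h)
    have hm₁ : IsMatching x₁ :=
      matching_insert (matching_subset (Finset.erase_subset _ _) hm) hk₀e hnol₁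
    have ht₁ : ∀ q ∈ x₁, f q.1 + g q.2 = c q.1 q.2 := by
      intro q hq
      rcases Finset.mem_insert.1 hq with hq | hq
      · subst hq; exact hl₁t
      · exact ht q (Finset.mem_of_mem_erase hq)
    have hk₁x₁ : ∀ l, (k₁, l) ∉ x₁ := by
      intro l hl
      rcases Finset.mem_insert.1 hl with h | h
      · exact hk₀k₁ (congrArg Prod.fst h).symm
      · have hx := Finset.mem_of_mem_erase h
        have : l = l₁ := matching_eq_snd hm hx hk₁l₁
        subst this
        exact (Finset.ne_of_mem_erase h) rfl
    have hsub : ∀ q : A × B, q ∈ x → q.1 ≠ k₁ → q ∈ x₁ := by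
      intro q hq hne
      apply Finset.mem_insert_of_mem
      apply Finset.mem_erase.2 ⟨_, hq⟩
      intro he; exact hne (congrArg Prod.fst he)
    have hsub2 : ∀ q : A × B, q ∈ x → q.2 ≠ l₁ → q ∈ x₁ := by
      intro q hq hne
      apply Finset.mem_insert_of_mem
      apply Finset.mem_erase.2 ⟨_, hq⟩
      intro he; exact hne (congrArg Prod.snd he)
    have hch₁ : List.Chain (Stepp c f g x₁ J) k₁ L' := by
      apply chain_mono L' k₁ hch'
      intro p q hq hpq
      obtain ⟨hfq, l, hlJ, hlt, hql⟩ := hpq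
      refine ⟨hfq, l, hlJ, hlt, hsub _ hql ?_⟩
      intro he; simp only at he; exact hk₁L' (he ▸ hq)
    have hlast : (k₀ :: k₁ :: L').getLast (List.cons_ne_nil _ _)
        = (k₁ :: L').getLast (List.cons_ne_nil _ _) := List.getLast_cons _
    have hgood₁ : Goodd c f g x₁ J ((k₁ :: L').getLast (List.cons_ne_nil _ _)) := by
      rw [hlast] at hgood
      obtain ⟨l, hlJ, hlt, hterm⟩ := hgood
      refine ⟨l, hlJ, hlt, ?_⟩
      rcases hterm with hfree | ⟨k', hk'x, hk'f⟩
      · left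
        have hll₁ : l ≠ l₁ := by
          intro h; rw [h] at hfree; exact hfree k₁ hk₁l₁
        intro k' hk'
        rcases Finset.mem_insert.1 hk' with h | h
        · exact hll₁ (congrArg Prod.snd h)
        · exact hfree k' (Finset.mem_of_mem_erase h)
      · right
        have hll₁ : l ≠ l₁ := by
          intro h
          subst h
          have : k' = k₁ := matching_eq_fst hm hk'x hk₁l₁
          rw [this] at hk'f
          rw [hk'f] at hfk₁; exact lt_irrefl 0 hfk₁
        exact ⟨k', hsub2 _ hk'x hll₁, hk'f⟩
    obtain ⟨x'', hm'', ht'', hcovA, hk₁cov, hagA, hcovB, hnewB⟩ :=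
      ih x₁ k₁ hm₁ ht₁ hk₁x₁ hfk₁ hch₁ (List.Nodup.of_cons hnd) hgood₁
    refine ⟨x'', hm'', ht'', ?_, ?_, ?_, ?_, ?_⟩
    · intro k hk hfk
      obtain ⟨l'', h⟩ := hk
      by_cases hke : k = k₁
      · subst hke; exact hk₁cov
      · exact hcovA k ⟨l'', hsub _ h hke⟩ hfk
    · exact hcovA k₀ ⟨l₁, Finset.mem_insert_self _ _⟩ hk₀f
    · intro k hk
      rcases hagA k hk with h | h
      · obtain ⟨l'', h⟩ := h
        rcases Finset.mem_insert.1 h with h | h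
        · right; exact congrArg Prod.fst h
        · left; exact ⟨l'', Finset.mem_of_mem_erase h⟩
      · left; rw [h]; exact ⟨l₁, hk₁l₁⟩
    · intro l'' hl''
      obtain ⟨k, h⟩ := hl''
      by_cases hle : l'' = l₁
      · refine hcovB l'' ⟨k₀, ?_⟩
        rw [hle]
        exact Finset.mem_insert_self _ _
      · exact hcovB l'' ⟨k, hsub2 _ h hle⟩
    · intro l'' hl''
      rcases hnewB l'' hl'' with h | h
      · obtain ⟨k, h⟩ := h
        rcases Finset.mem_insert.1 h with h | h
        · have : l'' = l₁ := congrArg Prod.snd h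
          subst this; left; exact ⟨k₁, hk₁l₁⟩
        · left; exact ⟨k, Finset.mem_of_mem_erase h⟩
      · right; exact h

/-- The search lemma: either an augmenting surgery exists, or (via `Hfail`) we get a
contradiction from a closed deficient set. -/
lemma search {c : A → B → ℝ} {f : A → ℝ} {g : B → ℝ} (hf : ∀ a, 0 ≤ f a)
    {x : Finset (A × B)} (hm : IsMatching x)
    (ht : ∀ q ∈ x, f q.1 + g q.2 = c q.1 q.2) (J : Finset B) (k₀ : A)
    (hk₀x : ∀ l, (k₀, l) ∉ x) (hk₀f : 0 < f k₀)
    (Hfail : ∀ K : Finset A, k₀ ∈ K → (∀ k ∈ K, 0 < f k) →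
      (∀ k ∈ K, ∀ l, f k + g l = c k l → l ∉ J →
        ∃ k', k' ∈ K ∧ k' ≠ k₀ ∧ (k', l) ∈ x) → False) :
    ∃ x' : Finset (A × B), IsMatching x' ∧ (∀ q ∈ x', f q.1 + g q.2 = c q.1 q.2) ∧
      (∀ k, (∃ l, (k, l) ∈ x) → 0 < f k → ∃ l, (k, l) ∈ x') ∧
      (∃ l, (k₀, l) ∈ x') ∧
      (∀ k, (∃ l, (k, l) ∈ x') → (∃ l, (k, l) ∈ x) ∨ k = k₀) ∧
      (∀ l, (∃ k, (k, l) ∈ x) → ∃ k, (k, l) ∈ x') ∧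
      (∀ l, (∃ k, (k, l) ∈ x') → (∃ k, (k, l) ∈ x) ∨ l ∉ J) := by
  classical
  by_cases hP : ∃ L : List A, List.Chain (Stepp c f g x J) k₀ L ∧ (k₀ :: L).Nodup ∧
      Goodd c f g x J ((k₀ :: L).getLast (List.cons_ne_nil _ _))
  · obtain ⟨L, h1, h2, h3⟩ := hP
    exact surgery L x k₀ hm ht hk₀x hk₀f h1 h2 h3
  · exfalso
    set K : Finset A := univ.filter (fun k => ∃ L : List A,
      List.Chain (Stepp c f g x J) k₀ L ∧ (k₀ :: L).Nodup ∧
      (k₀ :: L).getLast (List.cons_ne_nil _ _) = k) with hK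
    have hk₀K : k₀ ∈ K := by
      apply Finset.mem_filter.2 ⟨Finset.mem_univ _, ⟨[], List.Chain.nil, by simp, rfl⟩⟩
    apply Hfail K hk₀K
    · intro k hk
      obtain ⟨L, hc, hn, hl⟩ := (Finset.mem_filter.1 hk).2
      have hmem := List.getLast_mem (l := k₀ :: L) (List.cons_ne_nil _ _)
      rw [hl] at hmem
      rcases List.mem_cons.1 hmem with h | h
      · rw [h]; exact hk₀f
      · exact chain_pos L k₀ hc k h
    · intro k hk l hlt hlJ
      obtain ⟨L, hc, hn, hl⟩ := (Finset.mem_filter.1 hk).2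
      have hGd : ¬ Goodd c f g x J k := by
        intro hg
        exact hP ⟨L, hc, hn, by rw [hl]; exact hg⟩
      have hex : ∃ k'', (k'', l) ∈ x := by
        by_contra hno
        push_neg at hno
        exact hGd ⟨l, hlJ, hlt, Or.inl hno⟩
      obtain ⟨k'', hk''x⟩ := hex
      have hfk'' : 0 < f k'' := by
        rcases lt_or_eq_of_le (hf k'') with h | h
        · exact h
        · exact absurd ⟨l, hlJ, hlt, Or.inr ⟨k'', hk''x, h.symm⟩⟩ hGd
      have hstep : Stepp c f g x J k k'' := ⟨hfk'', l, hlJ, hlt, hk''x⟩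
      obtain ⟨L', hc', hn', hl'⟩ := reach_ext L hc hn hl hstep
      refine ⟨k'', Finset.mem_filter.2 ⟨Finset.mem_univ _, ⟨L', hc', hn', hl'⟩⟩, ?_, hk''x⟩
      intro he
      rw [he] at hk''x
      exact hk₀x l hk''x

/-! ### Contradiction lemmas -/

lemma fail0 {c : A → B → ℝ} {f : A → ℝ} {g : B → ℝ} (hfe : Feas c f g)
    (hmin : ∀ f' g', Feas c f' g' → obj f g ≤ obj f' g')
    {x : Finset (A × B)} (hm : IsMatching x)
    {k₀ : A} (K : Finset A) (hk₀K : k₀ ∈ K) (hKpos : ∀ k ∈ K, 0 < f k)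
    (hcl : ∀ k ∈ K, ∀ l, f k + g l = c k l →
      ∃ k', k' ∈ K ∧ k' ≠ k₀ ∧ (k', l) ∈ x) : False := by
  classical
  set I : Finset B := univ.filter (fun l => ∃ k ∈ K, f k + g l = c k l) with hI
  obtain ⟨ε, hεpos, f', g', hfe', hobj, _⟩ := adj hfe K I ⟨k₀, hk₀K⟩ hKpos
    (fun k hk l ht => Finset.mem_filter.2 ⟨Finset.mem_univ _, k, hk, ht⟩)
  have hKI : (K.card : ℝ) ≤ I.card := by
    have h1 := hmin f' g' hfe'
    rw [hobj] at h1
    nlinarith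
  have hIK : I.card ≤ (K.erase k₀).card := by
    set φ : B → A := fun l =>
      if h : ∃ k', k' ∈ K ∧ k' ≠ k₀ ∧ (k', l) ∈ x then h.choose else k₀ with hφ
    apply Finset.card_le_card_of_injOn φ
    · intro l hl
      obtain ⟨k, hk, ht⟩ := (Finset.mem_filter.1 hl).2
      have hw := hcl k hk l ht
      rw [hφ]; simp only [dif_pos hw]
      exact Finset.mem_erase.2 ⟨hw.choose_spec.2.1, hw.choose_spec.1⟩
    · intro l hl l' hl' he
      obtain ⟨k, hk, ht⟩ := (Finset.mem_filter.1 (by exact hl)).2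
      obtain ⟨k', hk', ht'⟩ := (Finset.mem_filter.1 (by exact hl')).2
      have hw := hcl k hk l ht
      have hw' := hcl k' hk' l' ht'
      have h1 : (φ l, l) ∈ x := by rw [hφ]; simp only [dif_pos hw]; exact hw.choose_spec.2.2
      have h2 : (φ l', l') ∈ x := by rw [hφ]; simp only [dif_pos hw']; exact hw'.choose_spec.2.2
      rw [he] at h1
      exact matching_eq_snd hm h2 h1 |>.symm
  rw [Finset.card_erase_of_mem hk₀K] at hIK
  have hKpos' : 1 ≤ K.card := Finset.card_pos.2 ⟨k₀, hk₀K⟩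
  have hlt : (I.card : ℕ) < K.card := by omega
  have hltr : (I.card : ℝ) < K.card := by exact_mod_cast hlt
  linarith

lemma fail1 {c : A → B → ℝ} {f : A → ℝ} {g : B → ℝ} (hfe : Feas c f g)
    (hmin : ∀ f' g', Feas c f' g' → obj f g ≤ obj f' g')
    (hgmax : ∀ f' g', Feas c f' g' → obj f' g' = obj f g → ∑ l, g' l ≤ ∑ l, g l)
    {x : Finset (A × B)} (hm : IsMatching x)
    {k₀ : A} (j₀ : B) (K : Finset A) (hk₀K : k₀ ∈ K) (hKpos : ∀ k ∈ K, 0 < f k)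
    (hcl : ∀ k ∈ K, ∀ l, f k + g l = c k l →
      l = j₀ ∨ ∃ k', k' ∈ K ∧ k' ≠ k₀ ∧ (k', l) ∈ x) : False := by
  classical
  set I : Finset B := univ.filter
    (fun l => l ≠ j₀ ∧ ∃ k ∈ K, f k + g l = c k l) with hI
  set R : Finset B := insert j₀ I with hR
  have hclR : ∀ k ∈ K, ∀ l, f k + g l = c k l → l ∈ R := by
    intro k hk l ht
    rcases hcl k hk l ht with h | h
    · rw [hR, h]; exact Finset.mem_insert_self _ _
    · rcases eq_or_ne l j₀ with he | hne
      · rw [hR, he]; exact Finset.mem_insert_self _ _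
      · exact Finset.mem_insert_of_mem
          (Finset.mem_filter.2 ⟨Finset.mem_univ _, hne, ⟨k, hk, ht⟩⟩)
  obtain ⟨ε, hεpos, f', g', hfe', hobj, hgs⟩ := adj hfe K R ⟨k₀, hk₀K⟩ hKpos hclR
  · have hIK : I.card ≤ (K.erase k₀).card := by
      set φ : B → A := fun l =>
        if h : ∃ k', k' ∈ K ∧ k' ≠ k₀ ∧ (k', l) ∈ x then h.choose else k₀ with hφ
      apply Finset.card_le_card_of_injOn φ
      · intro l hl
        obtain ⟨hlj, k, hk, ht⟩ := (Finset.mem_filter.1 hl).2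
        have hw := (hcl k hk l ht).resolve_left hlj
        rw [hφ]; simp only [dif_pos hw]
        exact Finset.mem_erase.2 ⟨hw.choose_spec.2.1, hw.choose_spec.1⟩
      · intro l hl l' hl' he
        obtain ⟨hlj, k, hk, ht⟩ := (Finset.mem_filter.1 (by exact hl)).2
        obtain ⟨hlj', k', hk', ht'⟩ := (Finset.mem_filter.1 (by exact hl')).2
        have hw := (hcl k hk l ht).resolve_left hlj
        have hw' := (hcl k' hk' l' ht').resolve_left hlj'
        have h1 : (φ l, l) ∈ x := by rw [hφ]; simp only [dif_pos hw]; exact hw.choose_spec.2.2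
        have h2 : (φ l', l') ∈ x := by rw [hφ]; simp only [dif_pos hw']; exact hw'.choose_spec.2.2
        rw [he] at h1
        exact matching_eq_snd hm h2 h1 |>.symm
    have hRK : R.card ≤ K.card := by
      have h1 : R.card ≤ I.card + 1 := Finset.card_insert_le _ _
      rw [Finset.card_erase_of_mem hk₀K] at hIK
      have hKpos' : 1 ≤ K.card := Finset.card_pos.2 ⟨k₀, hk₀K⟩
      omega
    have h1 := hmin f' g' hfe'
    rw [hobj] at h1
    have hKR : (K.card : ℝ) ≤ R.card := by nlinarith
    have hRKr : (R.card : ℝ) ≤ K.card := Nat.cast_le.2 hRK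
    have hcceq : (K.card : ℝ) = R.card := le_antisymm hKR hRKr
    have hobjeq : obj f' g' = obj f g := by rw [hobj, hcceq]; ring
    have h2 := hgmax f' g' hfe' hobjeq
    rw [hgs] at h2
    have hRpos : 0 < (R.card : ℝ) := by
      have : 0 < R.card := Finset.card_pos.2 ⟨j₀, Finset.mem_insert_self _ _⟩
      exact_mod_cast this
    nlinarith

/-! ### Covering all positive agents -/

open Classical in
lemma coverAgents {c : A → B → ℝ} {f : A → ℝ} {g : B → ℝ} (hfe : Feas c f g)
    (hmin : ∀ f' g', Feas c f' g' → obj f g ≤ obj f' g') :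
    ∀ (n : ℕ) (x : Finset (A × B)), IsMatching x →
    (∀ q ∈ x, f q.1 + g q.2 = c q.1 q.2) →
    ((univ.filter (fun k : A => 0 < f k ∧ ∀ l, (k, l) ∉ x)).card ≤ n) →
    ∃ x' : Finset (A × B), IsMatching x' ∧ (∀ q ∈ x', f q.1 + g q.2 = c q.1 q.2) ∧
      (∀ k, 0 < f k → ∃ l, (k, l) ∈ x') ∧
      (∀ l, (∃ k, (k, l) ∈ x) → ∃ k, (k, l) ∈ x') := by
  intro n
  induction n with
  | zero =>
    intro x hm ht hcard
    refine ⟨x, hm, ht, ?_, fun l h => h⟩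
    intro k hk
    by_contra hno
    push_neg at hno
    have : k ∈ univ.filter (fun k : A => 0 < f k ∧ ∀ l, (k, l) ∉ x) :=
      Finset.mem_filter.2 ⟨Finset.mem_univ _, hk, fun l hl => hno l hl⟩
    have := Finset.card_pos.2 ⟨k, this⟩
    omega
  | succ n ih =>
    intro x hm ht hcard
    by_cases hemp : (univ.filter (fun k : A => 0 < f k ∧ ∀ l, (k, l) ∉ x)) = ∅
    · refine ⟨x, hm, ht, ?_, fun l h => h⟩
      intro k hk
      by_contra hno
      push_neg at hno
      have : k ∈ (∅ : Finset A) := hemp ▸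
        Finset.mem_filter.2 ⟨Finset.mem_univ _, hk, fun l hl => hno l hl⟩
      exact absurd this (Finset.notMem_empty _)
    · obtain ⟨k₀, hk₀mem⟩ := Finset.nonempty_iff_ne_empty.2 hemp
      obtain ⟨hk₀f, hk₀x⟩ := (Finset.mem_filter.1 hk₀mem).2
      obtain ⟨x'', hm'', ht'', hcovA, hk₀cov, _, hcovB, _⟩ :=
        search hfe.1 hm ht ∅ k₀ hk₀x hk₀f
          (fun K hK hpos hclos => fail0 hfe hmin hm K hK hpos
            (fun k hk l ht' => hclos k hk l ht' (Finset.notMem_empty l)))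
      have hmeas : (univ.filter (fun k : A => 0 < f k ∧ ∀ l, (k, l) ∉ x'')).card ≤ n := by
        have hsub : (univ.filter (fun k : A => 0 < f k ∧ ∀ l, (k, l) ∉ x''))
            ⊆ (univ.filter (fun k : A => 0 < f k ∧ ∀ l, (k, l) ∉ x)).erase k₀ := by
          intro k hk
          obtain ⟨hkf, hkx⟩ := (Finset.mem_filter.1 hk).2
          have hkk₀ : k ≠ k₀ := by
            rintro rfl
            obtain ⟨l, hl⟩ := hk₀cov
            exact hkx l hl
          refine Finset.mem_erase.2 ⟨hkk₀, Finset.mem_filter.2 ⟨Finset.mem_univ _, hkf, ?_⟩⟩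
          intro l hl
          obtain ⟨l', hl'⟩ := hcovA k ⟨l, hl⟩ hkf
          exact hkx l' hl'
        have h1 := Finset.card_le_card hsub
        rw [Finset.card_erase_of_mem hk₀mem] at h1
        have h2 := Finset.card_pos.2 ⟨k₀, hk₀mem⟩
        omega
      obtain ⟨x', hm', ht', hcov', hB'⟩ := ih x'' hm'' ht'' hmeas
      exact ⟨x', hm', ht', hcov', fun l h => hB' l (hcovB l h)⟩

/-! ### Transposition -/

lemma mem_swap {x : Finset (B × A)} {a : A} {b : B} :
    (a, b) ∈ x.image Prod.swap ↔ (b, a) ∈ x := by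
  constructor
  · intro h
    obtain ⟨q, hq, he⟩ := Finset.mem_image.1 h
    have : q = (b, a) := by
      have := congrArg Prod.swap he
      rwa [Prod.swap_swap] at this
    rwa [this] at hq
  · intro h
    exact Finset.mem_image.2 ⟨(b, a), h, rfl⟩

lemma matching_swap {x : Finset (B × A)} (hm : IsMatching x) :
    IsMatching (x.image Prod.swap) := by
  constructor
  · intro p hp q hq he
    obtain ⟨p', hp', hpe⟩ := Finset.mem_image.1 hp
    obtain ⟨q', hq', hqe⟩ := Finset.mem_image.1 hq
    subst hpe; subst hqe
    have : p' = q' := hm.2 p' hp' q' hq' he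
    rw [this]
  · intro p hp q hq he
    obtain ⟨p', hp', hpe⟩ := Finset.mem_image.1 hp
    obtain ⟨q', hq', hqe⟩ := Finset.mem_image.1 hq
    subst hpe; subst hqe
    have : p' = q' := hm.1 p' hp' q' hq' he
    rw [this]

/-- Existence of a tight matching covering all positive agents and items, at a
minimizing dual point. -/
lemma coverBoth {c : A → B → ℝ} {f : A → ℝ} {g : B → ℝ} (hfe : Feas c f g)
    (hmin : ∀ f' g', Feas c f' g' → obj f g ≤ obj f' g') :
    ∃ x : Finset (A × B), IsMatching x ∧ (∀ q ∈ x, f q.1 + g q.2 = c q.1 q.2) ∧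
      (∀ k, 0 < f k → ∃ l, (k, l) ∈ x) ∧ (∀ l, 0 < g l → ∃ k, (k, l) ∈ x) := by
  classical
  have hfe' : Feas (fun l k => c k l) g f := feas_symm hfe
  have hmin' : ∀ f' g', Feas (fun (l : B) (k : A) => c k l) f' g' →
      obj g f ≤ obj f' g' := by
    intro f' g' h
    have h2 := hmin g' f' (feas_symm h)
    calc obj g f = obj f g := obj_symm f g
      _ ≤ obj g' f' := h2
      _ = obj f' g' := (obj_symm g' f').symm
  obtain ⟨y, hym, hyt, hycov, _⟩ := coverAgents hfe' hmin' _ (∅ : Finset (B × A))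
    ⟨fun p hp => absurd hp (Finset.notMem_empty _),
     fun p hp => absurd hp (Finset.notMem_empty _)⟩
    (fun q hq => absurd hq (Finset.notMem_empty _)) le_rfl
  set x₁ : Finset (A × B) := y.image Prod.swap with hx₁
  have hm₁ : IsMatching x₁ := matching_swap hym
  have ht₁ : ∀ q ∈ x₁, f q.1 + g q.2 = c q.1 q.2 := by
    intro q hq
    obtain ⟨q', hq', he⟩ := Finset.mem_image.1 hq
    subst he
    have := hyt q' hq'
    simp only [Prod.fst_swap, Prod.snd_swap]
    linarith
  obtain ⟨x', hm', ht', hcovA, hcovB⟩ := coverAgents hfe hmin _ x₁ hm₁ ht₁ le_rfl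
  refine ⟨x', hm', ht', hcovA, ?_⟩
  intro l hl
  obtain ⟨k, hk⟩ := hycov l hl
  exact hcovB l ⟨k, mem_swap.2 hk⟩

/-! ### Existence of a price-maximal optimal dual point -/

lemma exists_opt (c : A → B → ℝ) :
    ∃ f g, Feas c f g ∧ (∀ f' g', Feas c f' g' → obj f g ≤ obj f' g') ∧
      (∀ f' g', Feas c f' g' → obj f' g' = obj f g → ∑ l, g' l ≤ ∑ l, g l) := by
  classical
  set P := (A → ℝ) × (B → ℝ)
  set objP : P → ℝ := fun q => obj q.1 q.2 with hobjP
  set S : Set P := {q : P | Feas c q.1 q.2} with hS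
  have hc1 : Continuous fun q : P => ∑ a, q.1 a :=
    continuous_finset_sum _ (fun a _ => (continuous_apply a).comp continuous_fst)
  have hc2 : Continuous fun q : P => ∑ l, q.2 l :=
    continuous_finset_sum _ (fun l _ => (continuous_apply l).comp continuous_snd)
  have hobjc : Continuous objP := hc1.add hc2
  have hSc : IsClosed S := by
    have hSeq : S = (⋂ a : A, {q : P | 0 ≤ q.1 a}) ∩
        ((⋂ l : B, {q : P | 0 ≤ q.2 l}) ∩
         (⋂ a : A, ⋂ l : B, {q : P | c a l ≤ q.1 a + q.2 l})) := by
      ext q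
      simp only [hS, Set.mem_setOf_eq, Set.mem_inter_iff, Set.mem_iInter, Feas]
    rw [hSeq]
    refine IsClosed.inter (isClosed_iInter (fun a =>
      isClosed_le continuous_const ((continuous_apply a).comp continuous_fst)))
      (IsClosed.inter (isClosed_iInter (fun l =>
        isClosed_le continuous_const ((continuous_apply l).comp continuous_snd)))
       (isClosed_iInter fun a => isClosed_iInter fun l =>
         isClosed_le continuous_const (((continuous_apply a).comp continuous_fst).add
           ((continuous_apply l).comp continuous_snd))))
  -- a feasible point
  set f₀ : A → ℝ := fun a => (insert (0 : ℝ) (univ.image (c a))).max'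
    ⟨0, Finset.mem_insert_self _ _⟩ with hf₀
  have hfe₀ : Feas c f₀ (fun _ => 0) := by
    refine ⟨fun a => Finset.le_max' _ _ (Finset.mem_insert_self _ _), fun _ => le_rfl, ?_⟩
    intro a l
    have : c a l ≤ f₀ a := Finset.le_max' _ _
      (Finset.mem_insert_of_mem (Finset.mem_image_of_mem _ (Finset.mem_univ l)))
    simpa using this
  set q₀ : P := (f₀, fun _ => 0) with hq₀
  have hq₀S : q₀ ∈ S := hfe₀
  -- generic compactness of S-slices
  have key : ∀ (z : ℝ), 0 ≤ z → ∀ T : Set P, IsClosed T → T ⊆ S →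
      (∀ q ∈ T, objP q ≤ z) → IsCompact T := by
    intro z hz T hTc hTS hTz
    have hsub : T ⊆ (Set.univ.pi fun _ : A => Set.Icc (0 : ℝ) z) ×ˢ
        (Set.univ.pi fun _ : B => Set.Icc (0 : ℝ) z) := by
      intro q hq
      have hqS := hTS hq
      have hf : ∀ a, 0 ≤ q.1 a := hqS.1
      have hg : ∀ l, 0 ≤ q.2 l := hqS.2.1
      have h1 : ∑ a, q.1 a ≤ z := by
        have h2 : 0 ≤ ∑ l, q.2 l := Finset.sum_nonneg (fun l _ => hg l)
        have := hTz q hq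
        simp only [hobjP, obj] at this
        linarith
      have h1' : ∑ l, q.2 l ≤ z := by
        have h2 : 0 ≤ ∑ a, q.1 a := Finset.sum_nonneg (fun a _ => hf a)
        have := hTz q hq
        simp only [hobjP, obj] at this
        linarith
      constructor
      · intro a _
        exact ⟨hf a, le_trans (Finset.single_le_sum (fun i _ => hf i)
          (Finset.mem_univ a)) h1⟩
      · intro l _
        exact ⟨hg l, le_trans (Finset.single_le_sum (fun i _ => hg i)
          (Finset.mem_univ l)) h1'⟩
    exact IsCompact.of_isClosed_subset
      ((isCompact_univ_pi fun _ => isCompact_Icc).prod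
        (isCompact_univ_pi fun _ => isCompact_Icc)) hTc hsub
  set z₀ := objP q₀ with hz₀def
  have hz₀ : 0 ≤ z₀ := by
    simp only [hz₀def, hobjP, obj]
    have h1 : 0 ≤ ∑ a, q₀.1 a := Finset.sum_nonneg (fun a _ => hq₀S.1 a)
    have h2 : 0 ≤ ∑ l, q₀.2 l := Finset.sum_nonneg (fun l _ => hq₀S.2.1 l)
    linarith
  set K : Set P := S ∩ {q | objP q ≤ z₀} with hKdef
  have hKc : IsCompact K := key z₀ hz₀ K
    (hSc.inter (isClosed_le hobjc continuous_const)) Set.inter_subset_left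
    (fun q hq => hq.2)
  have hKne : K.Nonempty := ⟨q₀, hq₀S, by show objP q₀ ≤ z₀; exact le_rfl⟩
  obtain ⟨qm, hqmK, hqmmin⟩ := hKc.exists_isMinOn hKne hobjc.continuousOn
  set ms := objP qm with hms
  have hglob : ∀ q ∈ S, ms ≤ objP q := by
    intro q hq
    by_cases h : objP q ≤ z₀
    · exact isMinOn_iff.1 hqmmin q ⟨hq, h⟩
    · have h1 : ms ≤ z₀ := hqmK.2
      linarith [not_le.1 h]
  have hms0 : 0 ≤ ms := by
    simp only [hms, hobjP, obj]
    have h1 : 0 ≤ ∑ a, qm.1 a := Finset.sum_nonneg (fun a _ => hqmK.1.1 a)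
    have h2 : 0 ≤ ∑ l, qm.2 l := Finset.sum_nonneg (fun l _ => hqmK.1.2.1 l)
    linarith
  set W : Set P := S ∩ {q | objP q = ms} with hWdef
  have hWc : IsCompact W := key ms hms0 W
    (hSc.inter (isClosed_eq hobjc continuous_const)) Set.inter_subset_left
    (fun q hq => le_of_eq hq.2)
  have hWne : W.Nonempty := ⟨qm, hqmK.1, rfl⟩
  obtain ⟨qo, hqoW, hqomax⟩ := hWc.exists_isMaxOn hWne hc2.continuousOn
  refine ⟨qo.1, qo.2, hqoW.1, ?_, ?_⟩
  · intro f' g' hfe'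
    have h1 : objP qo = ms := hqoW.2
    have h2 := hglob (f', g') hfe'
    simp only [hobjP] at h1 h2
    rw [h1]
    exact h2
  · intro f' g' hfe' hobj'
    have h1 : objP qo = ms := hqoW.2
    have hmem : (f', g') ∈ W := by
      refine ⟨hfe', ?_⟩
      simp only [Set.mem_setOf_eq, hobjP]
      simp only [hobjP] at h1
      rw [hobj', h1]
    exact isMaxOn_iff.1 hqomax (f', g') hmem

end Gen

/-! ### Values of the assignment problem -/

section Vals

variable [Fintype N] [Fintype M] [DecidableEq N]

set_option maxHeartbeats 2000000 in
lemma exists_aval (b : N → M → ℝ) (T : Finset N)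
    (hT : ∃ x : Finset (N × M), IsMatching x ∧ ∀ i ∈ T, ∃ j, (i, j) ∈ x) :
    ∃ r, AVal b univ T r := by
  classical
  set SS : Finset (Finset (N × M)) := (univ : Finset (Finset (N × M))).filter
    (fun x => IsMatching x ∧ ∀ i ∈ T, ∃ j, (i, j) ∈ x) with hSS
  obtain ⟨x₀, hx₀m, hx₀T⟩ := hT
  have hx₀SS : x₀ ∈ SS := by
    rw [hSS]
    exact Finset.mem_filter.2 ⟨Finset.mem_univ _, hx₀m, hx₀T⟩
  have hne : (SS.image (fun x => ∑ q ∈ x, b q.1 q.2)).Nonempty :=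
    ⟨_, Finset.mem_image_of_mem _ hx₀SS⟩
  refine ⟨(SS.image (fun x => ∑ q ∈ x, b q.1 q.2)).max' hne, ?_, ?_⟩
  · obtain ⟨x, hx, he⟩ := Finset.mem_image.1 ((SS.image _).max'_mem hne)
    rw [hSS] at hx
    obtain ⟨hxm, hxT⟩ := (Finset.mem_filter.1 hx).2
    exact ⟨x, hxm, fun p _ => Finset.mem_union_left T (Finset.mem_univ _), hxT, he.symm⟩
  · intro r hr
    obtain ⟨x, hxm, _, hxT, he⟩ := hr
    rw [he]
    have hxSS : x ∈ SS := by
      rw [hSS]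
      exact Finset.mem_filter.2 ⟨Finset.mem_univ _, hxm, hxT⟩
    apply Finset.le_max'
    exact Finset.mem_image_of_mem _ hxSS

lemma aval_unique {b : N → M → ℝ} {T : Finset N} {r r' : ℝ}
    (h : AVal b univ T r) (h' : AVal b univ T r') : r = r' :=
  le_antisymm (h'.2 h.1) (h.2 h'.1)

end Vals

end S18

set_option maxHeartbeats 1000000 in
/-- there is an optimal dual solution that is the largest element of the
lattice of optimal dual solutions (smallest discounts, largest raises and prices), and at
this solution each `μ i` equals agent `i`'s VCG raise `V_ℓ(N) - V_ℓ(N \ {i})`,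
where `V_ℓ(N) = V(N, ∅)` and `V_ℓ(N \ {i}) = V(N, {i})`. -/
theorem stmt18 [Fintype N] [DecidableEq N] [Fintype M] [Nonempty M]
    (hmn : Fintype.card M ≤ Fintype.card N)
    (b : N → M → ℝ) (hb : ∀ i j, 0 ≤ b i j) :
    ∃ (π' μ' : N → ℝ) (p' : M → ℝ),
      DualOptimal b π' μ' p' ∧
      (∀ π μ p, DualOptimal b π μ p →
        (∀ i, π' i ≤ π i) ∧ (∀ i, μ i ≤ μ' i) ∧ (∀ j, p j ≤ p' j)) ∧
      ∀ (i : N) (rN ri : ℝ), AVal b univ ∅ rN → AVal b univ {i} ri →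
        μ' i = rN - ri := by
  classical
  obtain ⟨π0, p0, hfe, hmin, hgmax⟩ := S18.exists_opt b
  obtain ⟨xs, hxsm, hxst, hcovA, hcovB⟩ := S18.coverBoth hfe hmin
  have hxval : ∑ q ∈ xs, b q.1 q.2 = S18.obj π0 p0 :=
    S18.tightsum hfe hxsm hxst hcovA hcovB
  have hemp : IsMatching (∅ : Finset (N × M)) :=
    ⟨fun p hp => absurd hp (Finset.notMem_empty _),
     fun p hp => absurd hp (Finset.notMem_empty _)⟩
  obtain ⟨v, hv⟩ := S18.exists_aval b ∅
    ⟨∅, hemp, fun i hi => absurd hi (Finset.notMem_empty _)⟩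
  have hsingm : ∀ (i : N) (j : M), IsMatching ({(i, j)} : Finset (N × M)) := by
    intro i j
    constructor <;>
    · intro p hp q hq _
      rw [Finset.mem_singleton] at hp hq
      rw [hp, hq]
  have hviex : ∀ i : N, ∃ r, AVal b univ {i} r := by
    intro i
    obtain ⟨j0⟩ := ‹Nonempty M›
    refine S18.exists_aval b {i} ⟨{(i, j0)}, hsingm i j0, ?_⟩
    intro i' hi'
    rw [Finset.mem_singleton] at hi'
    subst hi'
    exact ⟨j0, Finset.mem_singleton_self _⟩
  choose vi hvi using hviex
  have hvmem : ∀ (y : Finset (N × M)), IsMatching y → ∑ q ∈ y, b q.1 q.2 ≤ v := by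
    intro y hym
    exact hv.2 ⟨y, hym, fun p _ => Finset.mem_union_left _ (Finset.mem_univ _),
      fun i hi => absurd hi (Finset.notMem_empty _), rfl⟩
  have hvobj : v = S18.obj π0 p0 := by
    obtain ⟨x, hxm, _, _, he⟩ := hv.1
    have h1 : v ≤ S18.obj π0 p0 := he ▸ S18.weakdual hfe hxm
    have h2 : S18.obj π0 p0 ≤ v := hxval ▸ hvmem xs hxsm
    linarith
  have hvibound : ∀ (i : N) (y : Finset (N × M)), IsMatching y → (∃ j, (i, j) ∈ y) →
      ∑ q ∈ y, b q.1 q.2 ≤ vi i := by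
    intro i y hym hcovi
    refine (hvi i).2 ⟨y, hym, fun p _ => Finset.mem_union_left _ (Finset.mem_univ _),
      ?_, rfl⟩
    intro i' hi'
    rw [Finset.mem_singleton] at hi'
    subst hi'
    exact hcovi
  have hviv : ∀ i, vi i ≤ v := by
    intro i
    obtain ⟨y, hym, _, _, he⟩ := (hvi i).1
    exact he ▸ hvmem y hym
  -- The crux inequality: feasibility of the VCG raises at the price-maximal point.
  have crux : ∀ i j, b i j - p0 j ≤ π0 i - (v - vi i) := by
    intro i
    by_cases hicov : ∃ l, (i, l) ∈ xs
    · have hvieq : vi i = v := by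
        have h1 : v ≤ vi i := by
          have he : v = ∑ q ∈ xs, b q.1 q.2 := hvobj.trans hxval.symm
          exact he ▸ hvibound i xs hxsm hicov
        exact le_antisymm (hviv i) h1
      intro j
      have hf := hfe.2.2 i j
      rw [hvieq]
      linarith
    · have hπ0 : π0 i = 0 := by
        by_contra h
        exact hicov (hcovA i (lt_of_le_of_ne (hfe.1 i) (Ne.symm h)))
      obtain ⟨js, _, hjs⟩ := Finset.exists_max_image univ (fun j => b i j - p0 j)
        Finset.univ_nonempty
      suffices hstar : v - vi i ≤ p0 js - b i js by
        intro j
        have := hjs j (Finset.mem_univ j)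
        rw [hπ0]
        linarith
      suffices hy : ∃ y : Finset (N × M), IsMatching y ∧ (∃ j, (i, j) ∈ y) ∧
          v - p0 js + b i js ≤ ∑ q ∈ y, b q.1 q.2 by
        obtain ⟨y, hym, hyi, hyval⟩ := hy
        have := hvibound i y hym hyi
        linarith
      have hixs : ∀ l, (i, l) ∉ xs := fun l hl => hicov ⟨l, hl⟩
      by_cases hjcov : ∃ k, (k, js) ∈ xs
      · obtain ⟨ks, hks⟩ := hjcov
        have hksi : ks ≠ i := by rintro rfl; exact hicov ⟨js, hks⟩
        by_cases hfks : 0 < π0 ks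
        · -- cascade: evict ks and re-match it avoiding js
          set x1 : Finset (N × M) := xs.erase (ks, js) with hx1def
          have hx1m : IsMatching x1 :=
            S18.matching_subset (Finset.erase_subset _ _) hxsm
          have hx1t : ∀ q ∈ x1, π0 q.1 + p0 q.2 = b q.1 q.2 :=
            fun q hq => hxst q (Finset.mem_of_mem_erase hq)
          have hksx1 : ∀ l, (ks, l) ∉ x1 := by
            intro l hl
            have hx := Finset.mem_of_mem_erase hl
            have : l = js := S18.matching_eq_snd hxsm hx hks
            subst this
            exact (Finset.ne_of_mem_erase hl) rfl
          obtain ⟨y1, hy1m, hy1t, hy1covA, hkscov, hy1agnew, hy1covB, hy1newB⟩ :=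
            S18.search hfe.1 hx1m hx1t {js} ks hksx1 hfks (by
              intro K hK hpos hclos
              refine S18.fail1 hfe hmin hgmax hx1m js K hK hpos ?_
              intro k hk l ht
              rcases eq_or_ne l js with he | hne
              · exact Or.inl he
              · exact Or.inr (hclos k hk l ht (Finset.notMem_singleton.2 hne)))
          have hiy1 : ∀ l, (i, l) ∉ y1 := by
            intro l hl
            rcases hy1agnew i ⟨l, hl⟩ with ⟨l', hl'⟩ | h
            · exact hixs l' (Finset.mem_of_mem_erase hl')
            · exact hksi h.symm
          have hnojs : ∀ k, (k, js) ∉ y1 := by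
            intro k hk
            rcases hy1newB js ⟨k, hk⟩ with ⟨k', hk'⟩ | h
            · have hx := Finset.mem_of_mem_erase hk'
              have : k' = ks := S18.matching_eq_fst hxsm hx hks
              subst this
              exact (Finset.ne_of_mem_erase hk') rfl
            · exact h (Finset.mem_singleton_self _)
          refine ⟨insert (i, js) y1, S18.matching_insert hy1m hiy1 hnojs,
            ⟨js, Finset.mem_insert_self _ _⟩, ?_⟩
          rw [Finset.sum_insert (hiy1 js)]
          -- lower bound for the value of y1
          set p0' : M → ℝ := fun l => if l = js then 0 else p0 l with hp0'
          have hp0'n : ∀ l, 0 ≤ p0' l := by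
            intro l
            rw [hp0']
            dsimp only
            split
            · exact le_rfl
            · exact hfe.2.1 l
          have hfstcov : ∀ k, 0 < π0 k → ∃ l, (k, l) ∈ y1 := by
            intro k hk
            by_cases hkks : k = ks
            · subst hkks; exact hkscov
            · obtain ⟨l, hl⟩ := hcovA k hk
              have hlx1 : (k, l) ∈ x1 := by
                apply Finset.mem_erase.2 ⟨_, hl⟩
                intro he
                exact hkks (congrArg Prod.fst he)
              exact hy1covA k ⟨l, hlx1⟩ hk
          have hsndcov : ∀ l, 0 < p0' l → ∃ k, (k, l) ∈ y1 := by
            intro l hl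
            have hljs : l ≠ js := by
              intro he
              rw [hp0'] at hl
              dsimp only at hl
              rw [if_pos he] at hl
              exact lt_irrefl 0 hl
            have hlpos : 0 < p0 l := by
              rw [hp0'] at hl
              dsimp only at hl
              rwa [if_neg hljs] at hl
            obtain ⟨k, hk⟩ := hcovB l hlpos
            have hkx1 : (k, l) ∈ x1 := by
              apply Finset.mem_erase.2 ⟨_, hk⟩
              intro he
              exact hljs (congrArg Prod.snd he)
            exact hy1covB l ⟨k, hkx1⟩
          have hfst : ∑ q ∈ y1, π0 q.1 = ∑ k, π0 k :=
            S18.sum_fst_eq hy1m hfe.1 hfstcov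
          have hsnd : ∑ q ∈ y1, p0' q.2 = ∑ l, p0' l :=
            S18.sum_snd_eq hy1m hp0'n hsndcov
          have hp0'sum : ∑ l, p0' l = ∑ l, p0 l - p0 js := by
            have he : ∀ l : M, p0' l = p0 l - (if l = js then p0 l else 0) := by
              intro l
              rw [hp0']
              dsimp only
              split <;> rename_i h
              · rw [h]; ring
              · ring
            simp_rw [he, Finset.sum_sub_distrib, Finset.sum_ite_eq' univ js p0]
            simp
          have hsum1 : ∑ q ∈ y1, (π0 q.1 + p0 q.2) = ∑ q ∈ y1, b q.1 q.2 :=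
            Finset.sum_congr rfl (fun q hq => hy1t q hq)
          have hsum2 : ∑ q ∈ y1, p0' q.2 ≤ ∑ q ∈ y1, p0 q.2 :=
            Finset.sum_le_sum (fun q _ => by
              rw [hp0']
              dsimp only
              split
              · exact hfe.2.1 _
              · exact le_rfl)
          have hexp : ∑ q ∈ y1, (π0 q.1 + p0 q.2)
              = ∑ q ∈ y1, π0 q.1 + ∑ q ∈ y1, p0 q.2 := Finset.sum_add_distrib
          have hobj : S18.obj π0 p0 = ∑ k, π0 k + ∑ l, p0 l := rfl
          rw [hvobj, hobj]
          rw [hfst] at hexp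
          rw [hsnd, hp0'sum] at hsum2
          linarith
        · -- drop the zero-value agent ks
          have hks0 : π0 ks = 0 := le_antisymm (not_lt.1 hfks) (hfe.1 ks)
          have hnojs : ∀ k, (k, js) ∉ xs.erase (ks, js) := by
            intro k hk
            have hx := Finset.mem_of_mem_erase hk
            have : k = ks := S18.matching_eq_fst hxsm hx hks
            subst this
            exact (Finset.ne_of_mem_erase hk) rfl
          have hie : ∀ l, (i, l) ∉ xs.erase (ks, js) :=
            fun l hl => hixs l (Finset.mem_of_mem_erase hl)
          refine ⟨insert (i, js) (xs.erase (ks, js)),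
            S18.matching_insert (S18.matching_subset (Finset.erase_subset _ _) hxsm)
              hie hnojs,
            ⟨js, Finset.mem_insert_self _ _⟩, ?_⟩
          rw [Finset.sum_insert (hie js)]
          have herase : b ks js + ∑ q ∈ xs.erase (ks, js), b q.1 q.2
              = ∑ q ∈ xs, b q.1 q.2 :=
            Finset.add_sum_erase xs (fun q : N × M => b q.1 q.2) hks
          have htks : π0 ks + p0 js = b ks js := hxst (ks, js) hks
          rw [hvobj]
          have : ∑ q ∈ xs.erase (ks, js), b q.1 q.2
              = S18.obj π0 p0 - b ks js := by rw [← hxval]; linarith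
          rw [this]
          rw [hks0] at htks
          linarith
      · -- js is free: just add (i, js)
        push_neg at hjcov
        refine ⟨insert (i, js) xs, S18.matching_insert hxsm hixs hjcov,
          ⟨js, Finset.mem_insert_self _ _⟩, ?_⟩
        rw [Finset.sum_insert (hixs js), hxval, hvobj]
        have := hfe.2.1 js
        linarith
  -- assemble the answer
  have hdf0 : DualFeasible b π0 (fun _ => 0) p0 :=
    ⟨hfe.1, fun _ => le_rfl, hfe.2.1, fun i j => by
      have := hfe.2.2 i j
      dsimp only
      linarith⟩
  refine ⟨π0, fun i => v - vi i, p0,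
    ⟨⟨hfe.1, fun i => sub_nonneg.2 (hviv i), hfe.2.1, fun i j => crux i j⟩, ?_⟩,
    ?_, ?_⟩
  · -- optimality
    intro π' μ' p' hdf'
    have hfeas' : S18.Feas b π' p' :=
      ⟨hdf'.1, hdf'.2.2.1, fun i j => by
        have h := hdf'.2.2.2 i j
        have h2 := hdf'.2.1 i
        linarith⟩
    have h1 := hmin π' p' hfeas'
    simp only [S18.obj] at h1
    simp only [DualObj]
    linarith
  · -- dominance over all optimal solutions
    intro π μ p hopt
    have hfeas : S18.Feas b π p :=
      ⟨hopt.1.1, hopt.1.2.2.1, fun i j => by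
        have h := hopt.1.2.2.2 i j
        have h2 := hopt.1.2.1 i
        linarith⟩
    have hobj2 : S18.obj π p = S18.obj π0 p0 := by
      have h1 := hmin π p hfeas
      have h2 := hopt.2 π0 (fun _ => 0) p0 hdf0
      simp only [DualObj] at h2
      simp only [S18.obj] at h1 ⊢
      linarith
    -- the lattice argument
    set fmin : N → ℝ := fun i => min (π0 i) (π i) with hfmin
    set gmax : M → ℝ := fun j => max (p0 j) (p j) with hgmaxd
    set fmax : N → ℝ := fun i => max (π0 i) (π i) with hfmax
    set gmin : M → ℝ := fun j => min (p0 j) (p j) with hgmin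
    have hfe1 : S18.Feas b fmin gmax := by
      refine ⟨fun i => le_min (hfe.1 i) (hfeas.1 i),
        fun j => le_trans (hfe.2.1 j) (le_max_left _ _), ?_⟩
      intro i j
      rcases le_total (π0 i) (π i) with h | h
      · have h1 := hfe.2.2 i j
        have h2 := le_max_left (p0 j) (p j)
        rw [hfmin]
        dsimp only
        rw [min_eq_left h]
        linarith
      · have h1 := hfeas.2.2 i j
        have h2 := le_max_right (p0 j) (p j)
        rw [hfmin]
        dsimp only
        rw [min_eq_right h]
        linarith
    have hfe2 : S18.Feas b fmax gmin := by
      refine ⟨fun i => le_trans (hfe.1 i) (le_max_left _ _),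
        fun j => le_min (hfe.2.1 j) (hfeas.2.1 j), ?_⟩
      intro i j
      rcases le_total (p0 j) (p j) with h | h
      · have h1 := hfe.2.2 i j
        have h2 := le_max_left (π0 i) (π i)
        rw [hgmin]
        dsimp only
        rw [min_eq_left h]
        linarith
      · have h1 := hfeas.2.2 i j
        have h2 := le_max_right (π0 i) (π i)
        rw [hgmin]
        dsimp only
        rw [min_eq_right h]
        linarith
    have e1 : ∑ i, fmin i + ∑ i, fmax i = ∑ i, π0 i + ∑ i, π i := by
      rw [← Finset.sum_add_distrib, ← Finset.sum_add_distrib]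
      exact Finset.sum_congr rfl (fun i _ => min_add_max _ _)
    have e2 : ∑ j, gmax j + ∑ j, gmin j = ∑ j, p0 j + ∑ j, p j := by
      rw [← Finset.sum_add_distrib, ← Finset.sum_add_distrib]
      refine Finset.sum_congr rfl (fun j _ => ?_)
      rw [hgmaxd, hgmin]
      dsimp only
      rw [add_comm]
      exact min_add_max _ _
    have h3 := hmin fmin gmax hfe1
    have h4 := hmin fmax gmin hfe2
    have h5 : S18.obj fmin gmax = S18.obj π0 p0 := by
      simp only [S18.obj] at h3 h4 hobj2 ⊢
      linarith
    have h6 := hgmax fmin gmax hfe1 h5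
    have h7 : ∑ j, p0 j ≤ ∑ j, gmax j :=
      Finset.sum_le_sum (fun j _ => le_max_left _ _)
    have h8 : ∀ j ∈ univ, p0 j = gmax j :=
      (Finset.sum_eq_sum_iff_of_le (fun j _ => le_max_left (p0 j) (p j))).1
        (le_antisymm h7 h6)
    have hpj : ∀ j, p j ≤ p0 j := by
      intro j
      have := h8 j (Finset.mem_univ j)
      rw [this]
      exact le_max_right _ _
    have hsgm : ∑ j, gmax j = ∑ j, p0 j := (le_antisymm h7 h6).symm
    have h9 : ∑ i, fmin i = ∑ i, π0 i := by
      simp only [S18.obj] at h5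
      linarith
    have h10 : ∀ i ∈ univ, fmin i = π0 i :=
      (Finset.sum_eq_sum_iff_of_le (fun i _ => min_le_left (π0 i) (π i))).1 h9
    have hπi : ∀ i, π0 i ≤ π i := by
      intro i
      have := h10 i (Finset.mem_univ i)
      rw [hfmin] at this
      dsimp only at this
      rcases le_total (π0 i) (π i) with h | h
      · exact h
      · rw [min_eq_right h] at this
        rw [this]
    refine ⟨hπi, ?_, hpj⟩
    -- μ bound via refined weak duality
    intro i
    obtain ⟨y, hym, _, hyT, hye⟩ := (hvi i).1
    obtain ⟨ji, hji⟩ := hyT i (Finset.mem_singleton_self i)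
    have hb1 : b i ji + μ i ≤ π i + p ji := by
      have := hopt.1.2.2.2 i ji
      linarith
    have hrest : ∀ q ∈ y.erase (i, ji), b q.1 q.2 ≤ π q.1 + p q.2 := by
      intro q _
      have h := hopt.1.2.2.2 q.1 q.2
      have h2 := hopt.1.2.1 q.1
      linarith
    have hsum1 : ∑ q ∈ y, b q.1 q.2 + μ i ≤ ∑ q ∈ y, (π q.1 + p q.2) := by
      rw [← Finset.add_sum_erase y (fun q => b q.1 q.2) hji,
        ← Finset.add_sum_erase y (fun q => π q.1 + p q.2) hji]
      have hs := Finset.sum_le_sum hrest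
      dsimp only
      linarith
    have hsum2 : ∑ q ∈ y, (π q.1 + p q.2) ≤ S18.obj π p := by
      rw [Finset.sum_add_distrib]
      have h1 := S18.sum_fst_le hym hfeas.1
      have h2 := S18.sum_snd_le hym hfeas.2.1
      simp only [S18.obj]
      linarith
    have : vi i + μ i ≤ v := by
      rw [hvobj, ← hobj2]
      rw [hye]
      linarith
    dsimp only
    linarith
  · -- the VCG raise identification
    intro i rN ri hrN hri
    have h1 : rN = v := S18.aval_unique hrN hv
    have h2 : ri = vi i := S18.aval_unique hri (hvi i)
    rw [h1, h2]
end
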